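/- arXiv:2203.12364 — 8 statements merged into one kernel-verified Lean document; each statement's English description precedes it below -/
import Mathlib

section
/- Let a > 1, K ≥ 1, n ≥ 1 be integers and d a divisor of n. The number of primes p ≤ K·n with multiplicative order of a modulo p equal to d is at most min(K·n/d, d·log a / log 2). -/
theorem card_primes_le_with_order_le_min
    (a K n d : ℕ) (ha : 1 < a) (hK : 1 ≤ K) (hn : 1 ≤ n) (hdn : d ∣ n) :
    (((Finset.range (K * n + 1)).filter
        (fun p => p.Prime ∧ orderOf (a : ZMod p) = d)).card : ℝ) ≤
      min ((K * n : ℝ) / d) (d * Real.log a / Real.log 2) := by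
  set S := (Finset.range (K * n + 1)).filter
      (fun p => p.Prime ∧ orderOf (a : ZMod p) = d) with hS
  have hd0 : 0 < d := Nat.pos_of_dvd_of_pos hdn hn
  -- basic facts about members of S
  have hmem : ∀ p ∈ S, p.Prime ∧ p ≤ K * n ∧ orderOf (a : ZMod p) = d := by
    intro p hp
    simp only [hS, Finset.mem_filter, Finset.mem_range] at hp
    exact ⟨hp.2.1, Nat.lt_succ_iff.mp hp.1, hp.2.2⟩
  refine le_min ?_ ?_
  · -- first bound: d ∣ p - 1
    have hdvd : ∀ p ∈ S, d ∣ p - 1 := by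
      intro p hp
      obtain ⟨hp1, _, hp3⟩ := hmem p hp
      haveI : Fact p.Prime := ⟨hp1⟩
      have hane : (a : ZMod p) ≠ 0 := by
        intro h
        have h1 : (a : ZMod p) ^ d = 1 := by rw [← hp3]; exact pow_orderOf_eq_one _
        rw [h, zero_pow hd0.ne'] at h1
        exact zero_ne_one h1
      rw [← hp3]
      exact ZMod.orderOf_dvd_card_sub_one hane
    have hcard : S.card ≤ (Finset.Icc 1 (K * n / d)).card := by
      apply Finset.card_le_card_of_injOn (fun p => (p - 1) / d)
      · intro p hp
        obtain ⟨hp1, hp2, _⟩ := hmem p hp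
        have hd := hdvd p hp
        have hp1' : 2 ≤ p := hp1.two_le
        have hdle : d ≤ p - 1 := Nat.le_of_dvd (by omega) hd
        simp only [Finset.mem_coe, Finset.mem_Icc]
        constructor
        · exact Nat.one_le_div_iff hd0 |>.mpr hdle
        · exact Nat.div_le_div_right (by omega)
      · intro p hp q hq hpq
        have hdp := hdvd p hp
        have hdq := hdvd q hq
        obtain ⟨hp1, _, _⟩ := hmem p hp
        obtain ⟨hq1, _, _⟩ := hmem q hq
        have := Nat.div_mul_cancel hdp
        have := Nat.div_mul_cancel hdq
        have h2p := hp1.two_le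
        have h2q := hq1.two_le
        have hpq' : (p-1)/d = (q-1)/d := hpq
        have : (p-1)/d * d = (q-1)/d * d := by rw [hpq']
        omega
    calc (S.card : ℝ) ≤ ((K * n / d : ℕ) : ℝ) := by
          rw [Nat.cast_le]; simpa using hcard
      _ ≤ (K * n : ℝ) / d := by
          push_cast
          exact_mod_cast Nat.cast_div_le
  · -- second bound: 2^card ≤ a^d
    have hdvd : ∀ p ∈ S, p ∣ a ^ d - 1 := by
      intro p hp
      obtain ⟨hp1, _, hp3⟩ := hmem p hp
      haveI : Fact p.Prime := ⟨hp1⟩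
      have hpow : (a : ZMod p) ^ d = 1 := by rw [← hp3]; exact pow_orderOf_eq_one _
      have h1 : 1 ≤ a ^ d := Nat.one_le_pow _ _ (by omega)
      have : ((a ^ d - 1 : ℕ) : ZMod p) = 0 := by
        push_cast [Nat.cast_sub h1]
        rw [hpow]; ring
      exact (ZMod.natCast_eq_zero_iff _ _).mp this
    have hprod : (∏ p ∈ S, p) ∣ a ^ d - 1 :=
      Finset.prod_primes_dvd _ (fun p hp => (hmem p hp).1.prime) hdvd
    have had : 2 ≤ a ^ d := by
      calc 2 = 2 ^ 1 := by norm_num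
        _ ≤ a ^ d := Nat.pow_le_pow_left (by omega) 1 |>.trans (Nat.pow_le_pow_right (by omega) hd0)
    have hle : 2 ^ S.card ≤ a ^ d := by
      calc 2 ^ S.card = ∏ _p ∈ S, 2 := by rw [Finset.prod_const]
        _ ≤ ∏ p ∈ S, p := Finset.prod_le_prod' (fun p hp => (hmem p hp).1.two_le)
        _ ≤ a ^ d - 1 := Nat.le_of_dvd (by omega) hprod
        _ ≤ a ^ d := by omega
    have hlog : (S.card : ℝ) * Real.log 2 ≤ d * Real.log a := by
      have := Real.log_le_log (by positivity) (show ((2:ℝ)) ^ S.card ≤ (a:ℝ) ^ d by exact_mod_cast hle)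
      rwa [Real.log_pow, Real.log_pow] at this
    rw [le_div_iff₀ (by positivity : (0:ℝ) < Real.log 2)]
    exact hlog
end

section
/- Let a > 1, K ≥ 1, n ≥ 1 be integers. The number of primes p ≤ K·n dividing a^n - 1 is at most d(n)·(K·n·log a / log 2)^{1/2} + d(n), where d(n) is the number of divisors of n. -/
theorem card_primes_le_dividing_pow_sub_one
    (a K n : ℕ) (ha : 1 < a) (hK : 1 ≤ K) (hn : 1 ≤ n) :
    (((Finset.range (K * n + 1)).filter
        (fun p => p.Prime ∧ p ∣ a ^ n - 1)).card : ℝ) ≤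
      (n.divisors.card : ℝ) * Real.sqrt ((K * n : ℝ) * Real.log a / Real.log 2)
        + (n.divisors.card : ℝ) := by
  set S := (Finset.range (K * n + 1)).filter (fun p => p.Prime ∧ p ∣ a ^ n - 1) with hSdef
  have hapow : 1 ≤ a ^ n := Nat.one_le_pow _ _ (by omega)
  have hcast : ∀ (p m : ℕ), 1 ≤ m → ((m : ℕ) : ZMod p) = ((m - 1 : ℕ) : ZMod p) + 1 := by
    intro p m hm
    conv_lhs => rw [show m = (m - 1) + 1 by omega]
    push_cast
    ring
  have hmem : ∀ p ∈ S, p.Prime ∧ p ≤ K * n ∧ p ∣ a ^ n - 1 := by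
    intro p hp
    simp only [hSdef, Finset.mem_filter, Finset.mem_range] at hp
    exact ⟨hp.2.1, by omega, hp.2.2⟩
  have hpow_one : ∀ p ∈ S, (a : ZMod p) ^ n = 1 := by
    intro p hp
    obtain ⟨hpp, _, hdvd⟩ := hmem p hp
    have h0 : ((a ^ n - 1 : ℕ) : ZMod p) = 0 :=
      (ZMod.natCast_eq_zero_iff _ _).mpr hdvd
    have h2 := hcast p (a ^ n) hapow
    rw [h0, zero_add] at h2
    rw [← Nat.cast_pow, h2]
  have hne : ∀ p ∈ S, (a : ZMod p) ≠ 0 := by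
    intro p hp h
    obtain ⟨hpp, _, hdvd⟩ := hmem p hp
    have hpa : p ∣ a := (ZMod.natCast_eq_zero_iff _ _).mp h
    have h1 : p ∣ a ^ n := hpa.trans (dvd_pow_self a (by omega))
    have h2 : p ∣ a ^ n - (a ^ n - 1) := Nat.dvd_sub h1 hdvd
    have h3 : a ^ n - (a ^ n - 1) = 1 := by omega
    rw [h3] at h2
    exact hpp.one_lt.ne' (Nat.dvd_one.mp h2)
  set f : ℕ → Finset ℕ := fun e => S.filter (fun p => orderOf (a : ZMod p) = e) with hfdef
  have hord_mem : ∀ p ∈ S, orderOf (a : ZMod p) ∈ n.divisors := by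
    intro p hp
    rw [Nat.mem_divisors]
    exact ⟨orderOf_dvd_of_pow_eq_one (hpow_one p hp), by omega⟩
  have hsub : S ⊆ n.divisors.biUnion f := by
    intro p hp
    rw [Finset.mem_biUnion]
    exact ⟨orderOf (a : ZMod p), hord_mem p hp, Finset.mem_filter.mpr ⟨hp, rfl⟩⟩
  have hcard : S.card ≤ ∑ e ∈ n.divisors, (f e).card :=
    (Finset.card_le_card hsub).trans (Finset.card_biUnion_le)
  have key : ∀ e ∈ n.divisors, ((f e).card : ℝ) ≤
      Real.sqrt ((K * n : ℝ) * Real.log a / Real.log 2) + 1 := by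
    intro e he
    obtain ⟨hedvd, hn0⟩ := Nat.mem_divisors.mp he
    have he1 : 1 ≤ e := Nat.pos_of_dvd_of_pos hedvd (by omega)
    -- Bound A : card ≤ K*n/e + 1 (via injection p ↦ (p-1)/e)
    have hA : (f e).card ≤ K * n / e + 1 := by
      have hcle : (f e).card ≤ (Finset.range (K * n / e + 1)).card := by
        apply Finset.card_le_card_of_injOn (fun p => (p - 1) / e)
        · intro p hp
          simp only [hfdef, Finset.mem_coe, Finset.mem_filter] at hp
          obtain ⟨hpS, hordp⟩ := hp
          obtain ⟨hpp, hple, _⟩ := hmem p hpS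
          simp only [Finset.mem_coe, Finset.mem_range]
          have : (p - 1) / e ≤ K * n / e := Nat.div_le_div_right (by omega)
          omega
        · intro p hp q hq hpq
          simp only [hfdef, Finset.mem_coe, Finset.mem_filter] at hp hq
          simp only at hpq
          obtain ⟨hpS, hordp⟩ := hp
          obtain ⟨hqS, hordq⟩ := hq
          obtain ⟨hpp, _, _⟩ := hmem p hpS
          obtain ⟨hqp, _, _⟩ := hmem q hqS
          haveI : Fact p.Prime := ⟨hpp⟩
          haveI : Fact q.Prime := ⟨hqp⟩
          have hdp : e ∣ p - 1 := by
            rw [← hordp]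
            exact ZMod.orderOf_dvd_card_sub_one (hne p hpS)
          have hdq : e ∣ q - 1 := by
            rw [← hordq]
            exact ZMod.orderOf_dvd_card_sub_one (hne q hqS)
          have h1 : (p - 1) / e * e = p - 1 := Nat.div_mul_cancel hdp
          have h2 : (q - 1) / e * e = q - 1 := Nat.div_mul_cancel hdq
          have h3 := congrArg (· * e) hpq
          rw [h1, h2] at h3
          have := hpp.two_le
          have := hqp.two_le
          omega
      simpa using hcle
    -- Bound B : 2 ^ card ≤ a ^ e, hence card ≤ e log a / log 2
    have hB : ((f e).card : ℝ) ≤ (e : ℝ) * Real.log a / Real.log 2 := by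
      have hae : 1 ≤ a ^ e := Nat.one_le_pow _ _ (by omega)
      have hprod : ∏ p ∈ f e, p ∣ a ^ e - 1 := by
        apply Finset.prod_primes_dvd
        · intro p hp
          simp only [hfdef, Finset.mem_filter] at hp
          exact (hmem p hp.1).1.prime
        · intro p hp
          simp only [hfdef, Finset.mem_filter] at hp
          obtain ⟨hpS, hordp⟩ := hp
          have hpe : (a : ZMod p) ^ e = 1 := by rw [← hordp]; exact pow_orderOf_eq_one _
          have h0 : ((a ^ e - 1 : ℕ) : ZMod p) = 0 := by
            have h1 : ((a ^ e : ℕ) : ZMod p) = 1 := by rwa [Nat.cast_pow]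
            have h2 := hcast p (a ^ e) hae
            rw [h1] at h2
            linear_combination -h2
          exact (ZMod.natCast_eq_zero_iff _ _).mp h0
      have h2pow : 2 ^ (f e).card ≤ a ^ e := by
        have hle1 : 2 ^ (f e).card ≤ ∏ p ∈ f e, p := by
          rw [← Finset.prod_const]
          apply Finset.prod_le_prod'
          intro p hp
          simp only [hfdef, Finset.mem_filter] at hp
          exact (hmem p hp.1).1.two_le
        have hle2 : ∏ p ∈ f e, p ≤ a ^ e - 1 := by
          apply Nat.le_of_dvd _ hprod
          have h2e : 2 ≤ a ^ e :=
            le_trans (by omega) (Nat.le_self_pow (by omega) a |>.trans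
              (Nat.pow_le_pow_right (by omega) he1))
          omega
        omega
      have hlog : ((f e).card : ℝ) * Real.log 2 ≤ (e : ℝ) * Real.log a := by
        have hcst : ((2:ℝ)) ^ (f e).card ≤ ((a:ℝ)) ^ e := by exact_mod_cast h2pow
        have := Real.log_le_log (by positivity) hcst
        rwa [Real.log_pow, Real.log_pow] at this
      exact (le_div_iff₀ (Real.log_pos (by norm_num))).mpr hlog
    -- combine
    set m : ℝ := ((f e).card : ℝ) with hm
    have hAr : m ≤ (K * n : ℝ) / (e : ℝ) + 1 := by
      have h1 := (Nat.cast_le (α := ℝ)).mpr hA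
      push_cast at h1
      have h2 : ((K * n / e : ℕ) : ℝ) ≤ ((K * n : ℕ) : ℝ) / (e : ℝ) := Nat.cast_div_le
      push_cast at h2
      linarith
    have hAB : ((K * n : ℝ) / (e : ℝ)) * ((e : ℝ) * Real.log a / Real.log 2)
        = (K * n : ℝ) * Real.log a / Real.log 2 := by
      have he0 : (e : ℝ) ≠ 0 := by positivity
      field_simp
    have hsq : 0 ≤ Real.sqrt ((K * n : ℝ) * Real.log a / Real.log 2) := Real.sqrt_nonneg _
    rcases le_or_gt m 1 with hm1 | hm1
    · linarith
    · have hm0 : (0:ℝ) ≤ m - 1 := by linarith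
      have hApos : 0 ≤ (K * n : ℝ) / (e : ℝ) := by positivity
      have hBpos : 0 ≤ (e : ℝ) * Real.log a / Real.log 2 := by
        have : 0 ≤ Real.log a := Real.log_nonneg (by exact_mod_cast ha.le)
        have : 0 < Real.log 2 := Real.log_pos (by norm_num)
        positivity
      have hsq2 : (m - 1) ^ 2 ≤ (K * n : ℝ) * Real.log a / Real.log 2 := by
        rw [← hAB]
        nlinarith
      have : m - 1 ≤ Real.sqrt ((K * n : ℝ) * Real.log a / Real.log 2) := by
        rw [show m - 1 = Real.sqrt ((m - 1) ^ 2) by rw [Real.sqrt_sq hm0]]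
        exact Real.sqrt_le_sqrt hsq2
      linarith
  calc (S.card : ℝ) ≤ ∑ e ∈ n.divisors, ((f e).card : ℝ) := by exact_mod_cast hcard
    _ ≤ ∑ _e ∈ n.divisors, (Real.sqrt ((K * n : ℝ) * Real.log a / Real.log 2) + 1) :=
        Finset.sum_le_sum key
    _ = (n.divisors.card : ℝ) * Real.sqrt ((K * n : ℝ) * Real.log a / Real.log 2)
        + (n.divisors.card : ℝ) := by
        rw [Finset.sum_const, nsmul_eq_mul]; ring
end

section
/- Let a > 1 be an integer and set u_n = a^n - 1. For every ε > 0, the sum over primes p ≤ n with p ∣ u_n of log p is O(n^{1/2 + ε}) as n → ∞. -/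
open Real Finset

lemma SLP_sum_log_le_log_of_dvd {s : Finset ℕ} {m : ℕ} (hm : m ≠ 0)
    (hp : ∀ p ∈ s, p.Prime) (hd : ∀ p ∈ s, p ∣ m) :
    ∑ p ∈ s, Real.log p ≤ Real.log m := by
  have hprod : ∏ p ∈ s, p ∣ m :=
    Finset.prod_primes_dvd m (fun p hp' => (hp p hp').prime) hd
  have h1 : ∑ p ∈ s, Real.log p = Real.log (∏ p ∈ s, (p:ℝ)) := by
    rw [Real.log_prod (fun p hp' => by exact_mod_cast (hp p hp').pos.ne')]
  rw [h1, ← Nat.cast_prod]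
  apply Real.log_le_log (by exact_mod_cast (Finset.prod_pos (fun p hp' => (hp p hp').pos)))
  exact_mod_cast Nat.le_of_dvd (Nat.pos_of_ne_zero hm) hprod

-- p prime, p ∣ a^n - 1, n ≥ 1, a ≥ 2 facts
lemma SLP_pow_mod_one {a n p : ℕ} (ha : 1 < a) (hn : n ≠ 0) (hp : p.Prime)
    (hd : p ∣ a ^ n - 1) : ((a : ZMod p)) ^ n = 1 := by
  have h1 : 1 ≤ a ^ n := Nat.one_le_pow _ _ (by omega)
  have : ((a ^ n - 1 : ℕ) : ZMod p) = 0 := (ZMod.natCast_eq_zero_iff _ _).2 hd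
  rw [Nat.cast_sub h1] at this
  push_cast at this
  linear_combination (norm := ring_nf) this

lemma SLP_dvd_of_pow_eq_one {a d p : ℕ} (ha : 1 < a) (h : ((a : ZMod p)) ^ d = 1) :
    p ∣ a ^ d - 1 := by
  have h1 : 1 ≤ a ^ d := Nat.one_le_pow _ _ (by omega)
  rw [← ZMod.natCast_eq_zero_iff, Nat.cast_sub h1]
  push_cast
  rw [h]
  ring

-- card of subset of primes ≡ 1 mod d in [0, n]
lemma SLP_card_le_div_add_one {n d : ℕ} (hd : d ≠ 0) (s : Finset ℕ)
    (hs : ∀ p ∈ s, p ≤ n ∧ 1 ≤ p ∧ d ∣ p - 1) : s.card ≤ n / d + 1 := by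
  have : s.card = (s.image (fun p => (p - 1) / d)).card := by
    rw [Finset.card_image_of_injOn]
    intro p hp q hq hpq
    obtain ⟨-, hp1, ⟨kp, hkp⟩⟩ := hs p hp
    obtain ⟨-, hq1, ⟨kq, hkq⟩⟩ := hs q hq
    simp only at hpq
    rw [hkp, hkq, Nat.mul_div_cancel_left _ (Nat.pos_of_ne_zero hd),
      Nat.mul_div_cancel_left _ (Nat.pos_of_ne_zero hd)] at hpq
    rw [hpq] at hkp
    omega
  rw [this]
  have hsub : s.image (fun p => (p - 1) / d) ⊆ Finset.range (n / d + 1) := by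
    intro x hx
    obtain ⟨p, hp, rfl⟩ := Finset.mem_image.1 hx
    obtain ⟨hpn, hp1, -⟩ := hs p hp
    exact Finset.mem_range.2 (Nat.lt_succ_of_le (Nat.div_le_div_right (by omega)))
  simpa using Finset.card_le_card hsub

lemma SLP_main_bound (a : ℕ) (ha : 1 < a) (n : ℕ) (hn : 2 ≤ n) :
    ∑ p ∈ (Finset.range (n + 1)).filter
        (fun p => p.Prime ∧ p ∣ a ^ n - 1), Real.log p
    ≤ (n.divisors.card : ℝ) * (2 * Real.sqrt n * (Real.log a + Real.log n)) := by
  set P := (Finset.range (n + 1)).filter (fun p => p.Prime ∧ p ∣ a ^ n - 1) with hP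
  have hn0 : n ≠ 0 := by omega
  -- facts about members of P
  have hPfacts : ∀ p ∈ P, p.Prime ∧ p ∣ a ^ n - 1 ∧ p ≤ n := by
    intro p hp
    simp only [hP, Finset.mem_filter, Finset.mem_range] at hp
    exact ⟨hp.2.1, hp.2.2, by omega⟩
  have hamem : ∀ p ∈ P, (a : ZMod p) ≠ 0 := by
    intro p hp
    obtain ⟨hpp, hpd, -⟩ := hPfacts p hp
    haveI := Fact.mk hpp
    intro h0
    have h1 := SLP_pow_mod_one ha hn0 hpp hpd
    rw [h0, zero_pow hn0] at h1
    exact zero_ne_one h1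
  have hmaps : ∀ p ∈ P, orderOf ((a : ZMod p)) ∈ n.divisors := by
    intro p hp
    obtain ⟨hpp, hpd, -⟩ := hPfacts p hp
    haveI := Fact.mk hpp
    exact Nat.mem_divisors.2 ⟨orderOf_dvd_of_pow_eq_one (SLP_pow_mod_one ha hn0 hpp hpd), hn0⟩
  rw [← Finset.sum_fiberwise_of_maps_to hmaps]
  have hfiber : ∀ d ∈ n.divisors,
      ∑ p ∈ P.filter (fun p => orderOf ((a : ZMod p)) = d), Real.log p
      ≤ 2 * Real.sqrt n * (Real.log a + Real.log n) := by
    intro d hd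
    obtain ⟨hddvd, -⟩ := Nat.mem_divisors.1 hd
    have hd0 : d ≠ 0 := by
      rintro rfl
      exact hn0 (Nat.eq_zero_of_zero_dvd hddvd)
    set s := P.filter (fun p => orderOf ((a : ZMod p)) = d) with hs
    have hsprime : ∀ p ∈ s, p.Prime := fun p hp =>
      (hPfacts p (Finset.mem_filter.1 hp).1).1
    have hsqrtn : 1 ≤ Real.sqrt n := by
      rw [show (1:ℝ) = Real.sqrt 1 by simp]
      exact Real.sqrt_le_sqrt (by exact_mod_cast Nat.one_le_iff_ne_zero.2 hn0)
    have hloga : 0 ≤ Real.log a := Real.log_nonneg (by exact_mod_cast ha.le)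
    have hlogn : 0 ≤ Real.log n := Real.log_nonneg (by exact_mod_cast (show 1 ≤ n by omega))
    by_cases hcase : (d : ℝ) ≤ Real.sqrt n
    · -- small d : use divisibility of a^d - 1
      have hbd : ∑ p ∈ s, Real.log p ≤ Real.log (a ^ d - 1 : ℕ) := by
        apply SLP_sum_log_le_log_of_dvd
        · have : 2 ≤ a ^ d := by
            calc 2 ≤ a := ha
              _ = a ^ 1 := (pow_one a).symm
              _ ≤ a ^ d := Nat.pow_le_pow_right (by omega) (by omega)
          omega
        · exact hsprime
        · intro p hp
          obtain ⟨hpP, hord⟩ := Finset.mem_filter.1 hp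
          exact SLP_dvd_of_pow_eq_one ha (hord ▸ pow_orderOf_eq_one ((a : ZMod p)))
      have hbd2 : Real.log (a ^ d - 1 : ℕ) ≤ d * Real.log a := by
        calc Real.log (a ^ d - 1 : ℕ) ≤ Real.log ((a:ℝ) ^ d) := by
              apply Real.log_le_log
              · have : 2 ≤ a ^ d := by
                  calc 2 ≤ a := ha
                    _ = a ^ 1 := (pow_one a).symm
                    _ ≤ a ^ d := Nat.pow_le_pow_right (by omega) (by omega)
                have h1 : 1 ≤ a ^ d - 1 := by omega
                exact_mod_cast Nat.lt_of_lt_of_le Nat.zero_lt_one h1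
              · push_cast [Nat.cast_sub (Nat.one_le_pow _ _ (by omega : 0 < a))]
                linarith [Nat.one_le_pow d a (by omega : 0 < a)]
          _ = d * Real.log a := by rw [Real.log_pow]
      calc ∑ p ∈ s, Real.log p ≤ d * Real.log a := hbd.trans hbd2
        _ ≤ Real.sqrt n * Real.log a := mul_le_mul_of_nonneg_right hcase hloga
        _ ≤ 2 * Real.sqrt n * (Real.log a + Real.log n) := by nlinarith
    · -- large d : count primes ≡ 1 mod d
      push_neg at hcase
      have hcard : s.card ≤ n / d + 1 := by
        apply SLP_card_le_div_add_one hd0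
        intro p hp
        obtain ⟨hpP, hord⟩ := Finset.mem_filter.1 hp
        obtain ⟨hpp, hpd, hpn⟩ := hPfacts p hpP
        haveI := Fact.mk hpp
        refine ⟨hpn, hpp.one_lt.le, ?_⟩
        rw [← hord]
        exact orderOf_dvd_of_pow_eq_one (ZMod.pow_card_sub_one_eq_one (hamem p hpP))
      have hlogle : ∀ p ∈ s, Real.log p ≤ Real.log n := by
        intro p hp
        obtain ⟨hpP, -⟩ := Finset.mem_filter.1 hp
        obtain ⟨hpp, -, hpn⟩ := hPfacts p hpP
        exact Real.log_le_log (by exact_mod_cast hpp.pos) (by exact_mod_cast hpn)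
      have hsum : ∑ p ∈ s, Real.log p ≤ (s.card : ℝ) * Real.log n := by
        calc ∑ p ∈ s, Real.log p ≤ ∑ _p ∈ s, Real.log n := Finset.sum_le_sum hlogle
          _ = (s.card : ℝ) * Real.log n := by rw [Finset.sum_const, nsmul_eq_mul]
      have hcardR : (s.card : ℝ) ≤ 2 * Real.sqrt n := by
        have h1 : (s.card : ℝ) ≤ (n / d : ℕ) + 1 := by exact_mod_cast hcard
        have h2 : ((n / d : ℕ) : ℝ) ≤ (n : ℝ) / d := Nat.cast_div_le
        have h3 : (n : ℝ) / d ≤ (n : ℝ) / Real.sqrt n := by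
          apply div_le_div_of_nonneg_left (by positivity) (by linarith) hcase.le
        rw [Real.div_sqrt] at h3
        linarith
      calc ∑ p ∈ s, Real.log p ≤ (s.card : ℝ) * Real.log n :=
            hsum
        _ ≤ 2 * Real.sqrt n * Real.log n := mul_le_mul_of_nonneg_right hcardR hlogn
        _ ≤ 2 * Real.sqrt n * (Real.log a + Real.log n) := by nlinarith
  calc ∑ d ∈ n.divisors, ∑ p ∈ P.filter (fun p => orderOf ((a : ZMod p)) = d), Real.log p
      ≤ ∑ _d ∈ n.divisors, 2 * Real.sqrt n * (Real.log a + Real.log n) :=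
        Finset.sum_le_sum hfiber
    _ = (n.divisors.card : ℝ) * (2 * Real.sqrt n * (Real.log a + Real.log n)) := by
        rw [Finset.sum_const, nsmul_eq_mul]
theorem SLP_aux_M (ε : ℝ) (hε : 0 < ε) : ∃ M : ℝ, 1 ≤ M ∧ ∀ k : ℕ, (k + 1 : ℝ) ≤ M * (2:ℝ) ^ (ε * k) := by
  set c := ε * Real.log 2 with hc
  have hc0 : 0 < c := mul_pos hε (Real.log_pos one_lt_two)
  set M := max 1 (4 / c^2) with hMdef
  refine ⟨M, le_max_left _ _, fun k => ?_⟩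
  have h1 : (2:ℝ) ^ (ε * k) = Real.exp (c * k) := by
    rw [Real.rpow_def_of_pos two_pos, hc]; ring_nf
  set t := c * k / 2 with htdef
  have ht : 0 ≤ t := by positivity
  have h2 : (t + 1)^2 ≤ Real.exp (c * k) := by
    calc (t + 1)^2 ≤ (Real.exp t)^2 :=
          pow_le_pow_left₀ (by positivity) (Real.add_one_le_exp t) 2
      _ = Real.exp (c * k) := by rw [sq, ← Real.exp_add, htdef]; ring_nf
  have hM1 : (1:ℝ) ≤ M := le_max_left _ _
  have hM2 : 4 / c^2 ≤ M := le_max_right _ _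
  have hk2 : (k:ℝ) ≤ (k:ℝ)^2 := by
    rcases Nat.eq_zero_or_pos k with h | h
    · simp [h]
    · nlinarith [(Nat.one_le_cast (α := ℝ)).2 h]
  have hc2 : 0 < c^2 := by positivity
  have key : (4 / c^2) * t^2 = (k:ℝ)^2 := by rw [htdef]; field_simp; ring
  have e1 : M * (t + 1)^2 ≤ M * Real.exp (c * k) :=
    mul_le_mul_of_nonneg_left h2 (le_trans zero_le_one hM1)
  have e2 : (4 / c^2) * t^2 ≤ M * t^2 := mul_le_mul_of_nonneg_right hM2 (sq_nonneg t)
  rw [h1]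
  nlinarith [mul_nonneg (le_trans zero_le_one hM1) ht]

theorem SLP_divisor_bound (ε : ℝ) (hε : 0 < ε) :
    ∃ C : ℝ, 0 < C ∧ ∀ n : ℕ, n ≠ 0 → (n.divisors.card : ℝ) ≤ C * (n:ℝ) ^ ε := by
  obtain ⟨M, hM1, hM⟩ := SLP_aux_M ε hε
  set K := ⌈(2:ℝ) ^ (1/ε)⌉₊ with hK
  refine ⟨M ^ K, pow_pos (lt_of_lt_of_le one_pos hM1) K, fun n hn => ?_⟩
  have hcard : (n.divisors.card : ℝ) =
      ∏ p ∈ n.primeFactors, ((n.factorization p : ℝ) + 1) := by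
    rw [Nat.card_divisors hn]
    push_cast
    rfl
  have hfact : ∀ p ∈ n.primeFactors, ((n.factorization p : ℝ) + 1) ≤
      (if p < K then M else 1) * ((p:ℝ) ^ (n.factorization p)) ^ ε := by
    intro p hp
    have hpp : p.Prime := Nat.prime_of_mem_primeFactors hp
    have hp2 : (2:ℝ) ≤ (p:ℝ) := by exact_mod_cast hpp.two_le
    set k := n.factorization p with hkdef
    have hrw : ((p:ℝ) ^ k) ^ ε = ((p:ℝ) ^ ε) ^ k := by
      rw [← Real.rpow_natCast ((p:ℝ)^ε) k, ← Real.rpow_mul (by positivity),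
        ← Real.rpow_natCast (p:ℝ) k, ← Real.rpow_mul (by positivity), mul_comm]
    by_cases hlt : p < K
    · simp only [hlt, if_true]
      calc ((k:ℝ) + 1) ≤ M * (2:ℝ) ^ (ε * k) := hM k
        _ ≤ M * ((p:ℝ) ^ k) ^ ε := by
            apply mul_le_mul_of_nonneg_left _ (le_trans zero_le_one hM1)
            rw [hrw, ← Real.rpow_natCast ((p:ℝ)^ε) k, ← Real.rpow_mul (by positivity)]
            exact Real.rpow_le_rpow (by norm_num) hp2 (by positivity)
        _ = M * ((p:ℝ) ^ k) ^ ε := rfl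
    · simp only [hlt, if_false, one_mul]
      have hKp : (K:ℝ) ≤ (p:ℝ) := by exact_mod_cast Nat.le_of_not_lt hlt
      have h2p : (2:ℝ) ≤ (p:ℝ) ^ ε := by
        have h1 : (2:ℝ) ^ (1/ε) ≤ (p:ℝ) := le_trans (Nat.le_ceil _) hKp
        calc (2:ℝ) = ((2:ℝ) ^ (1/ε)) ^ ε := by
              rw [← Real.rpow_mul (by norm_num), one_div_mul_cancel (ne_of_gt hε), Real.rpow_one]
          _ ≤ (p:ℝ) ^ ε := Real.rpow_le_rpow (by positivity) h1 (le_of_lt hε)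
      calc ((k:ℝ) + 1) ≤ (2:ℝ) ^ k := by
            have := (Nat.lt_two_pow_self (n := k))
            exact_mod_cast Nat.succ_le_of_lt this
        _ ≤ ((p:ℝ) ^ ε) ^ k := pow_le_pow_left₀ (by norm_num) h2p k
        _ = ((p:ℝ) ^ k) ^ ε := hrw.symm
  have hn' : ∏ p ∈ n.primeFactors, ((p:ℝ) ^ (n.factorization p)) = (n:ℝ) := by
    have h : ∏ p ∈ n.primeFactors, p ^ n.factorization p = n := by
      rw [← Nat.support_factorization]
      exact Nat.factorization_prod_pow_eq_self hn
    have h2 := congrArg (Nat.cast (R := ℝ)) h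
    push_cast at h2
    exact h2
  calc (n.divisors.card : ℝ) = ∏ p ∈ n.primeFactors, ((n.factorization p : ℝ) + 1) := hcard
    _ ≤ ∏ p ∈ n.primeFactors, (if p < K then M else 1) * ((p:ℝ) ^ (n.factorization p)) ^ ε :=
        Finset.prod_le_prod (fun p _ => by positivity) hfact
    _ = (∏ p ∈ n.primeFactors, (if p < K then M else 1)) *
        ∏ p ∈ n.primeFactors, ((p:ℝ) ^ (n.factorization p)) ^ ε := Finset.prod_mul_distrib
    _ = (∏ p ∈ n.primeFactors, (if p < K then M else 1)) * (n:ℝ) ^ ε := by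
        rw [Real.finset_prod_rpow _ _ (fun p _ => by positivity), hn']
    _ ≤ M ^ K * (n:ℝ) ^ ε := by
        apply mul_le_mul_of_nonneg_right _ (by positivity)
        rw [← Finset.prod_filter, Finset.prod_const]
        have hsub : (n.primeFactors.filter (· < K)).card ≤ K := by
          have : n.primeFactors.filter (· < K) ⊆ Finset.range K := fun x hx => by
            simp only [Finset.mem_filter] at hx
            exact Finset.mem_range.2 hx.2
          simpa using Finset.card_le_card this
        exact pow_le_pow_right₀ hM1 hsub

theorem sum_log_primes_dividing_isBigO
    (a : ℕ) (ha : 1 < a) (ε : ℝ) (hε : 0 < ε) :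
    (fun n : ℕ => ∑ p ∈ (Finset.range (n + 1)).filter
        (fun p => p.Prime ∧ p ∣ a ^ n - 1), Real.log p)
      =O[Filter.atTop] (fun n : ℕ => (n : ℝ) ^ ((1 : ℝ) / 2 + ε)) := by
  obtain ⟨C, hC, hdiv⟩ := SLP_divisor_bound (ε/2) (by linarith)
  have h1 : (fun n : ℕ => (n.divisors.card : ℝ)) =O[Filter.atTop]
      (fun n : ℕ => (n:ℝ) ^ (ε/2)) := by
    apply Asymptotics.IsBigO.of_bound C
    filter_upwards [Filter.eventually_ge_atTop 1] with n hn
    have h := hdiv n (by omega)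
    rw [Real.norm_eq_abs, Real.norm_eq_abs, abs_of_nonneg (by positivity),
      abs_of_nonneg (Real.rpow_nonneg (Nat.cast_nonneg n) _)]
    exact h
  have hsqrt : (fun n : ℕ => Real.sqrt n) =O[Filter.atTop]
      (fun n : ℕ => (n:ℝ) ^ ((1:ℝ)/2)) :=
    (Filter.EventuallyEq.isBigO
      (Filter.Eventually.of_forall fun n => Real.sqrt_eq_rpow (n:ℝ)))
  have hlog : (fun n : ℕ => Real.log n) =O[Filter.atTop]
      (fun n : ℕ => (n:ℝ) ^ (ε/2)) :=
    ((isLittleO_log_rpow_atTop (by linarith)).isBigO).comp_tendsto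
      tendsto_natCast_atTop_atTop
  have hone : ∀ n : ℕ, 1 ≤ n → (1:ℝ) ≤ (n:ℝ) ^ (ε/2) := by
    intro n hn
    calc (1:ℝ) = (1:ℝ) ^ (ε/2) := (Real.one_rpow _).symm
      _ ≤ (n:ℝ) ^ (ε/2) := Real.rpow_le_rpow zero_le_one (by exact_mod_cast hn) (by linarith)
  have hconst : (fun _ : ℕ => Real.log a) =O[Filter.atTop]
      (fun n : ℕ => (n:ℝ) ^ (ε/2)) := by
    apply Asymptotics.IsBigO.of_bound ‖Real.log a‖
    filter_upwards [Filter.eventually_ge_atTop 1] with n hn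
    rw [Real.norm_eq_abs ((n:ℝ) ^ (ε/2)), abs_of_nonneg (Real.rpow_nonneg (Nat.cast_nonneg n) _)]
    nlinarith [hone n hn, norm_nonneg (Real.log a)]
  have hBig : (fun n : ℕ => (n.divisors.card : ℝ) *
      (2 * Real.sqrt n * (Real.log a + Real.log n))) =O[Filter.atTop]
      (fun n : ℕ => (n:ℝ)^(ε/2) * ((n:ℝ)^((1:ℝ)/2) * (n:ℝ)^(ε/2))) := by
    have h2 := h1.mul ((hsqrt.mul (hconst.add hlog)).const_mul_left 2)
    apply h2.congr_left
    intro n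
    ring
  have hEq : (fun n : ℕ => (n:ℝ)^(ε/2) * ((n:ℝ)^((1:ℝ)/2) * (n:ℝ)^(ε/2)))
      =ᶠ[Filter.atTop] (fun n : ℕ => (n:ℝ) ^ ((1:ℝ)/2 + ε)) := by
    filter_upwards [Filter.eventually_ge_atTop 1] with n hn
    have hpos : (0:ℝ) < n := by exact_mod_cast (by omega : 0 < n)
    rw [← Real.rpow_add hpos, ← Real.rpow_add hpos]
    ring_nf
  have h0 : (fun n : ℕ => ∑ p ∈ (Finset.range (n + 1)).filter
      (fun p => p.Prime ∧ p ∣ a ^ n - 1), Real.log p) =O[Filter.atTop]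
      (fun n : ℕ => (n.divisors.card : ℝ) *
        (2 * Real.sqrt n * (Real.log a + Real.log n))) := by
    apply Asymptotics.IsBigO.of_bound 1
    filter_upwards [Filter.eventually_ge_atTop 2] with n hn
    have hb := SLP_main_bound a ha n hn
    have hS : 0 ≤ ∑ p ∈ (Finset.range (n + 1)).filter
        (fun p => p.Prime ∧ p ∣ a ^ n - 1), Real.log p :=
      Finset.sum_nonneg fun p _ => Real.log_natCast_nonneg p
    have hR : 0 ≤ (n.divisors.card : ℝ) *
        (2 * Real.sqrt n * (Real.log a + Real.log n)) := by
      have := Real.log_natCast_nonneg a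
      have := Real.log_natCast_nonneg n
      positivity
    rw [Real.norm_eq_abs, abs_of_nonneg hS, one_mul, Real.norm_eq_abs, abs_of_nonneg hR]
    exact hb
  exact h0.trans (hBig.trans hEq.isBigO)
end

section
/- Let a > 1 be an integer, p an odd prime not dividing a, with ℓ = ord_p(a) and o = ν_p(a^ℓ - 1). For a real number N ≥ 2, the sum Σ_{N/2 < n ≤ N} ν_p(a^n - 1) is at most (N/(2ℓ) + 1)·o + Σ_{k ≥ 1} (N/(2ℓp^k) + 1)·[ℓp^k ≤ N], and in particular is O(N·o/ℓ + N/(ℓ p) + log N). -/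
open Finset

theorem aux1 (a p n : ℕ) (ha : 1 < a) (hp : p.Prime) :
    p ∣ a ^ n - 1 ↔ ((a : ZMod p)) ^ n = 1 := by
  haveI := Fact.mk hp
  have h1 : (1:ℕ) ≤ a ^ n := Nat.one_le_pow _ _ (by omega)
  rw [← ZMod.natCast_eq_zero_iff, Nat.cast_sub h1]
  push_cast
  rw [sub_eq_zero]
theorem count_dvd (b c d : ℕ) (hbc : b ≤ c) :
    #{n ∈ Finset.Ioc b c | d ∣ n} = c / d - b / d := by
  have h : Finset.Ioc 0 b ∪ Finset.Ioc b c = Finset.Ioc 0 c :=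
    Finset.Ioc_union_Ioc_eq_Ioc (Nat.zero_le b) hbc
  have hdisj : Disjoint {n ∈ Finset.Ioc 0 b | d ∣ n} {n ∈ Finset.Ioc b c | d ∣ n} := by
    apply Finset.disjoint_filter_filter
    simp [Finset.disjoint_left, Finset.mem_Ioc]; omega
  have := Finset.card_union_of_disjoint hdisj
  rw [← Finset.filter_union, h] at this
  rw [Nat.Ioc_filter_dvd_card_eq_div, Nat.Ioc_filter_dvd_card_eq_div] at this
  omega
theorem count_val (p m K : ℕ) (hp : p.Prime) (hm : m ≠ 0) (hmK : m ≤ K) :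
    m.factorization p = ∑ k ∈ Finset.range K, if p ^ (k + 1) ∣ m then 1 else 0 := by
  have hνK : m.factorization p ≤ K := by
    have h1 : p ^ m.factorization p ∣ m := Nat.ordProj_dvd m p
    have h2 : p ^ m.factorization p ≤ m := Nat.le_of_dvd (Nat.pos_of_ne_zero hm) h1
    have h3 : m.factorization p < 2 ^ m.factorization p := Nat.lt_two_pow_self
    have h4 : 2 ^ m.factorization p ≤ p ^ m.factorization p :=
      Nat.pow_le_pow_left hp.two_le _
    omega
  rw [← Finset.sum_filter]
  have heq : {k ∈ Finset.range K | p ^ (k + 1) ∣ m} = Finset.range (m.factorization p) := by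
    ext k
    simp only [Finset.mem_filter, Finset.mem_range,
      hp.pow_dvd_iff_le_factorization hm]
    omega
  simp [heq]


theorem emult_eq (p n : ℕ) (hp : p.Prime) (hn : n ≠ 0) :
    emultiplicity p n = (n.factorization p : ℕ∞) := by
  have hf : FiniteMultiplicity p n := Nat.finiteMultiplicity_iff.mpr ⟨hp.ne_one, Nat.pos_of_ne_zero hn⟩
  rw [hf.emultiplicity_eq_multiplicity, Nat.multiplicity_eq_factorization hp hn]

theorem aux2 (a p ℓ n : ℕ) (ha : 1 < a) (hp : p.Prime) (hp2 : p ≠ 2) (hpa : ¬ p ∣ a)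
    (hℓ : ℓ = orderOf (a : ZMod p)) (hn : n ≠ 0) (hd : ℓ ∣ n) :
    (a ^ n - 1).factorization p = (a ^ ℓ - 1).factorization p + (n / ℓ).factorization p := by
  haveI := Fact.mk hp
  have hodd : Odd p := hp.odd_of_ne_two hp2
  have hunit : IsUnit (a : ZMod p) := by
    rw [ZMod.isUnit_iff_coprime]
    exact (hp.coprime_iff_not_dvd.mpr hpa).symm
  have hℓpos : 0 < ℓ := by
    rw [hℓ, ← hunit.unit_spec, orderOf_units]
    exact orderOf_pos _
  obtain ⟨m, rfl⟩ := hd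
  have hm : m ≠ 0 := by rintro rfl; simp at hn
  have hxy : p ∣ a ^ ℓ - 1 := (aux1 a p ℓ ha hp).mpr (by rw [hℓ]; exact pow_orderOf_eq_one _)
  have hx : ¬ p ∣ a ^ ℓ := fun h => hpa (hp.dvd_of_dvd_pow h)
  have key := Nat.emultiplicity_pow_sub_pow hp hodd hxy hx m
  rw [one_pow, ← pow_mul] at key
  have h1 : a ^ (ℓ * m) - 1 ≠ 0 := by
    have : 1 < a ^ (ℓ * m) := one_lt_pow₀ ha (by simpa using ⟨hℓpos.ne', hm⟩) -- maybe wrong name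
    omega
  have h2 : a ^ ℓ - 1 ≠ 0 := by
    have : 1 < a ^ ℓ := one_lt_pow₀ ha hℓpos.ne'
    omega
  rw [emult_eq p _ hp h1, emult_eq p _ hp h2, emult_eq p m hp hm,
    Nat.mul_div_cancel_left m hℓpos] at *
  exact_mod_cast key


theorem core (a p ℓ b c : ℕ) (ha : 1 < a) (hp : p.Prime) (hp2 : p ≠ 2) (hpa : ¬ p ∣ a)
    (hℓ : ℓ = orderOf (a : ZMod p)) (hb : 0 < b) (hbc : b ≤ c) :
    ∑ n ∈ Finset.Ioc b c, (a ^ n - 1).factorization p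
      = (a ^ ℓ - 1).factorization p * (c / ℓ - b / ℓ) +
        ∑ k ∈ Finset.range c, (c / (ℓ * p ^ (k + 1)) - b / (ℓ * p ^ (k + 1))) := by
  haveI := Fact.mk hp
  have hunit : IsUnit (a : ZMod p) := by
    rw [ZMod.isUnit_iff_coprime]
    exact (hp.coprime_iff_not_dvd.mpr hpa).symm
  have hℓpos : 0 < ℓ := by
    rw [hℓ, ← hunit.unit_spec, orderOf_units]
    exact orderOf_pos _
  set S := Finset.Ioc b c with hS
  -- step 1: restrict to multiples of ℓ
  have step1 : ∑ n ∈ S, (a ^ n - 1).factorization p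
      = ∑ n ∈ S.filter (ℓ ∣ ·), (a ^ n - 1).factorization p := by
    symm
    apply Finset.sum_filter_of_ne
    intro n _ hne
    by_contra hnd
    apply hne
    apply Nat.factorization_eq_zero_of_not_dvd
    rw [aux1 a p n ha hp, ← orderOf_dvd_iff_pow_eq_one, ← hℓ]
    exact hnd
  -- step 2: the value formula on multiples
  have step2 : ∀ n ∈ S.filter (ℓ ∣ ·), (a ^ n - 1).factorization p
      = (a ^ ℓ - 1).factorization p + (n / ℓ).factorization p := by
    intro n hn
    simp only [Finset.mem_filter, hS, Finset.mem_Ioc] at hn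
    exact aux2 a p ℓ n ha hp hp2 hpa hℓ (by omega) hn.2
  rw [step1, Finset.sum_congr rfl step2, Finset.sum_add_distrib]
  congr 1
  · rw [Finset.sum_const, smul_eq_mul, mul_comm, count_dvd b c ℓ hbc]
  -- step 4-5
  have step4 : ∀ n ∈ S.filter (ℓ ∣ ·), (n / ℓ).factorization p
      = ∑ k ∈ Finset.range c, if p ^ (k + 1) ∣ n / ℓ then 1 else 0 := by
    intro n hn
    simp only [Finset.mem_filter, hS, Finset.mem_Ioc] at hn
    apply count_val p _ c hp
    · exact (Nat.div_pos (Nat.le_of_dvd (by omega) hn.2) hℓpos).ne'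
    · exact le_trans (Nat.div_le_self _ _) hn.1.2
  rw [Finset.sum_congr rfl step4, Finset.sum_comm]
  apply Finset.sum_congr rfl
  intro k _
  rw [← Finset.sum_filter, Finset.sum_const, smul_eq_mul, mul_one, Finset.filter_filter]
  rw [show ({n ∈ S | ℓ ∣ n ∧ p ^ (k + 1) ∣ n / ℓ} : Finset ℕ)
      = {n ∈ S | ℓ * p ^ (k + 1) ∣ n} from ?_, count_dvd b c _ hbc]
  apply Finset.filter_congr
  intro n hn
  simp only [hS, Finset.mem_Ioc] at hn
  constructor
  · rintro ⟨h1, h2⟩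
    exact (Nat.dvd_div_iff_mul_dvd h1).mp h2
  · intro h
    have h1 : ℓ ∣ n := (dvd_mul_right ℓ _).trans h
    exact ⟨h1, (Nat.dvd_div_iff_mul_dvd h1).mpr h⟩

theorem natdiv_lb (b d : ℕ) (hd : 0 < d) : (b : ℝ) - d + 1 ≤ (d : ℝ) * (b / d : ℕ) := by
  have h1 : d * (b / d) + b % d = b := Nat.div_add_mod b d
  have h2 : b % d < d := Nat.mod_lt b hd
  have : b + 1 ≤ d * (b / d) + d := by omega
  have := (Nat.cast_le (α := ℝ)).mpr this
  push_cast at this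
  linarith

theorem key_bound (b c d : ℕ) (N : ℝ) (hd : 0 < d) (hbc : b ≤ c)
    (hcN : (c : ℝ) ≤ N) (hbN : N / 2 - 1 ≤ (b : ℝ)) :
    ((c / d - b / d : ℕ) : ℝ) ≤ N / (2 * d) + 1 := by
  have hdd : (0:ℝ) < d := by exact_mod_cast hd
  have h1 : ((c / d - b / d : ℕ) : ℝ) = ((c / d : ℕ) : ℝ) - ((b / d : ℕ) : ℝ) := by
    have := Nat.div_le_div_right (c := d) hbc
    push_cast [Nat.cast_sub this]
    ring
  rw [h1]
  have h2 : ((c / d : ℕ) : ℝ) ≤ (c : ℝ) / d := Nat.cast_div_le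
  have h3 : (b : ℝ) - d + 1 ≤ (d : ℝ) * (b / d : ℕ) := natdiv_lb b d hd
  have h4 : (N / 2 - d) / d ≤ ((b / d : ℕ) : ℝ) := by
    rw [div_le_iff₀ hdd] at *
    nlinarith
  have h5 : (c:ℝ)/d ≤ N/d := by gcongr
  have h6 : (N/2 - d)/d = N/(2*d) - 1 := by field_simp
  have h7 : N/(2*(d:ℝ)) - 1 ≤ ((b / d : ℕ) : ℝ) := h6 ▸ h4
  have h8 : N/(d:ℝ) = N/(2*d) + N/(2*d) := by field_simp; ring
  linarith

theorem simple_bound (b c d : ℕ) (N : ℝ) (hd : 0 < d) (hcN : (c : ℝ) ≤ N) :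
    ((c / d - b / d : ℕ) : ℝ) ≤ N / d := by
  have hdd : (0:ℝ) < d := by exact_mod_cast hd
  have h2 : ((c / d : ℕ) : ℝ) ≤ (c : ℝ) / d := Nat.cast_div_le
  have h0 : ((c / d - b / d : ℕ) : ℝ) ≤ ((c / d : ℕ) : ℝ) := by
    exact_mod_cast Nat.sub_le _ _
  have h5 : (c:ℝ)/d ≤ N/d := by gcongr
  linarith

theorem vanish (b c d : ℕ) (hcd : c < d) : (c / d - b / d : ℕ) = 0 := by
  rw [Nat.div_eq_of_lt hcd]; simp

theorem sum_valuation_interval_bound :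
    ∃ C > 0, ∀ (a p : ℕ) (N : ℝ), 1 < a → p.Prime → p ≠ 2 → ¬ p ∣ a → 2 ≤ N →
    ∀ ℓ o : ℕ, ℓ = orderOf (a : ZMod p) → o = (a ^ ℓ - 1).factorization p →
    ((∑ n ∈ Finset.Ioc ⌊N / 2⌋₊ ⌊N⌋₊, ((a ^ n - 1).factorization p : ℝ)) ≤
        (N / (2 * ℓ) + 1) * o +
          ∑' k : ℕ, (if ((ℓ * p ^ (k + 1) : ℕ) : ℝ) ≤ N
            then N / (2 * ℓ * p ^ (k + 1)) + 1 else 0)) ∧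
    ((∑ n ∈ Finset.Ioc ⌊N / 2⌋₊ ⌊N⌋₊, ((a ^ n - 1).factorization p : ℝ)) ≤
        C * (N * o / ℓ + N / (ℓ * p) + Real.log N)) := by
  refine ⟨2, by norm_num, ?_⟩
  intro a p N ha hp hp2 hpa hN ℓ o hℓ ho
  haveI := Fact.mk hp
  set b := ⌊N / 2⌋₊ with hbdef
  set c := ⌊N⌋₊ with hcdef
  have hN0 : (0:ℝ) < N := by linarith
  have hcN : (c : ℝ) ≤ N := Nat.floor_le (by linarith)
  have hbN : N / 2 - 1 ≤ (b : ℝ) := by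
    have := Nat.lt_floor_add_one (N/2); linarith
  have hb : 0 < b := Nat.le_floor (by push_cast; linarith)
  have hbc : b ≤ c := Nat.floor_mono (by linarith)
  have hunit : IsUnit (a : ZMod p) := by
    rw [ZMod.isUnit_iff_coprime]
    exact (hp.coprime_iff_not_dvd.mpr hpa).symm
  have hℓpos : 0 < ℓ := by
    rw [hℓ, ← hunit.unit_spec, orderOf_units]
    exact orderOf_pos _
  have hppos : 0 < p := hp.pos
  have hdpos : ∀ k : ℕ, 0 < ℓ * p ^ (k+1) := fun k => Nat.mul_pos hℓpos (Nat.pow_pos hppos)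
  have hℓR : (0:ℝ) < ℓ := by exact_mod_cast hℓpos
  have hpR : (0:ℝ) < p := by exact_mod_cast hppos
  have hcore := core a p ℓ b c ha hp hp2 hpa hℓ hb hbc
  have hsum : (∑ n ∈ Finset.Ioc b c, ((a ^ n - 1).factorization p : ℝ))
      = (o : ℝ) * ((c/ℓ - b/ℓ : ℕ) : ℝ)
        + ∑ k ∈ Finset.range c, ((c/(ℓ*p^(k+1)) - b/(ℓ*p^(k+1)) : ℕ) : ℝ) := by
    rw [← Nat.cast_sum, hcore, ← ho]
    push_cast
    ring
  constructor
  · rw [hsum]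
    have hA0 : ((c/ℓ - b/ℓ : ℕ) : ℝ) ≤ N/(2*(ℓ:ℝ)) + 1 := key_bound b c ℓ N hℓpos hbc hcN hbN
    have h1 : (o:ℝ) * ((c/ℓ - b/ℓ : ℕ) : ℝ) ≤ (N/(2*(ℓ:ℝ))+1) * o := by
      rw [mul_comm]
      exact mul_le_mul_of_nonneg_right hA0 (Nat.cast_nonneg o)
    have hvanish : ∀ k ∉ Finset.range c,
        (if ((ℓ * p ^ (k + 1) : ℕ) : ℝ) ≤ N then N / (2 * (ℓ:ℝ) * (p:ℝ) ^ (k + 1)) + 1 else 0) = 0 := by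
      intro k hk
      rw [Finset.mem_range, not_lt] at hk
      rw [if_neg]
      push_neg
      have hnat : c + 1 ≤ ℓ * p ^ (k+1) := by
        have h1 : k + 1 < 2 ^ (k+1) := Nat.lt_two_pow_self
        have h2 : 2 ^ (k+1) ≤ p ^ (k+1) := Nat.pow_le_pow_left hp.two_le _
        have h3 : p ^ (k+1) ≤ ℓ * p ^ (k+1) := Nat.le_mul_of_pos_left _ hℓpos
        omega
      calc N < (c:ℝ) + 1 := Nat.lt_floor_add_one N
        _ ≤ ((ℓ * p ^ (k+1) : ℕ) : ℝ) := by exact_mod_cast hnat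
    have h2 : (∑ k ∈ Finset.range c, ((c/(ℓ*p^(k+1)) - b/(ℓ*p^(k+1)) : ℕ) : ℝ))
        ≤ ∑' k : ℕ, (if ((ℓ * p ^ (k + 1) : ℕ) : ℝ) ≤ N
            then N / (2 * (ℓ:ℝ) * (p:ℝ) ^ (k + 1)) + 1 else 0) := by
      rw [tsum_eq_sum hvanish]
      apply Finset.sum_le_sum
      intro k _
      by_cases hcond : ((ℓ * p ^ (k + 1) : ℕ) : ℝ) ≤ N
      · rw [if_pos hcond]
        have hkb := key_bound b c (ℓ*p^(k+1)) N (hdpos k) hbc hcN hbN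
        have heq : N / (2 * ((ℓ*p^(k+1) : ℕ) : ℝ)) = N / (2 * (ℓ:ℝ) * (p:ℝ) ^ (k + 1)) := by
          push_cast; ring_nf
        linarith [heq ▸ hkb]
      · rw [if_neg hcond]
        have hcd : c < ℓ * p ^ (k+1) := by
          by_contra hcon
          push_neg at hcon
          exact hcond (le_trans (by exact_mod_cast hcon) hcN)
        rw [vanish b c _ hcd]
        norm_num
    linarith
  · rw [hsum]
    have hA0' : ((c/ℓ - b/ℓ : ℕ) : ℝ) ≤ N/(ℓ:ℝ) := simple_bound b c ℓ N hℓpos hcN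
    have h1 : (o:ℝ) * ((c/ℓ - b/ℓ : ℕ) : ℝ) ≤ N * o / ℓ := by
      have := mul_le_mul_of_nonneg_left hA0' (Nat.cast_nonneg (α := ℝ) o)
      calc (o:ℝ) * ((c/ℓ - b/ℓ : ℕ) : ℝ) ≤ (o:ℝ) * (N/(ℓ:ℝ)) := this
        _ = N * o / ℓ := by ring
    have h2 : (∑ k ∈ Finset.range c, ((c/(ℓ*p^(k+1)) - b/(ℓ*p^(k+1)) : ℕ) : ℝ))
        ≤ 2 * (N / ((ℓ:ℝ) * p)) := by
      have step1 : (∑ k ∈ Finset.range c, ((c/(ℓ*p^(k+1)) - b/(ℓ*p^(k+1)) : ℕ) : ℝ))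
          ≤ ∑ k ∈ Finset.range c, (N / ((ℓ:ℝ) * p)) * (1/2 : ℝ)^k := by
        apply Finset.sum_le_sum
        intro k _
        have hsb := simple_bound b c (ℓ*p^(k+1)) N (hdpos k) hcN
        have hle : N / (((ℓ*p^(k+1) : ℕ)) : ℝ) ≤ (N / ((ℓ:ℝ) * p)) * (1/2 : ℝ)^k := by
          have heq : N / (((ℓ*p^(k+1) : ℕ)) : ℝ) = (N / ((ℓ:ℝ) * p)) * ((1:ℝ)/p)^k := by
            push_cast
            rw [pow_succ]
            field_simp
            ring_nf
            try tauto
            rw [← mul_pow, mul_inv_cancel₀ hpR.ne', one_pow]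
          rw [heq]
          apply mul_le_mul_of_nonneg_left
          · apply pow_le_pow_left₀ (by positivity)
            rw [div_le_div_iff₀ hpR (by norm_num)]
            have : (2:ℝ) ≤ p := by exact_mod_cast hp.two_le
            linarith
          · positivity
        linarith
      have step2 : (∑ k ∈ Finset.range c, (N / ((ℓ:ℝ) * p)) * (1/2 : ℝ)^k)
          = (N / ((ℓ:ℝ) * p)) * ∑ k ∈ Finset.range c, (1/2 : ℝ)^k := by
        rw [Finset.mul_sum]
      have step3 : (N / ((ℓ:ℝ) * p)) * (∑ k ∈ Finset.range c, (1/2 : ℝ)^k) ≤ (N / ((ℓ:ℝ) * p)) * 2 := by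
        apply mul_le_mul_of_nonneg_left (sum_geometric_two_le c) (by positivity)
      calc _ ≤ _ := step1
        _ = _ := step2
        _ ≤ (N / ((ℓ:ℝ) * p)) * 2 := step3
        _ = 2 * (N / ((ℓ:ℝ) * p)) := by ring
    have hlog : 0 ≤ Real.log N := Real.log_nonneg (by linarith)
    have hnn1 : (0:ℝ) ≤ N * o / ℓ := by positivity
    have hnn2 : (0:ℝ) ≤ N / ((ℓ:ℝ) * p) := by positivity
    linarith
end

section
/- Let a > 1 be an integer. For every real N ≥ 2, Σ_{N/2 < n ≤ N} log(s_{N}(a^n - 1)) = O_a(N^2 / log N), where s_y(m) denotes the largest divisor of m all of whose prime factors are at most y. -/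
/-- The `y`-smooth part of `m` : the largest divisor of `m` all of whose
prime factors are at most `y`. -/
noncomputable def smoothPart (y : ℝ) (m : ℕ) : ℕ :=
  ∏ p ∈ m.primeFactors, p ^ (if (p : ℝ) ≤ y then m.factorization p else 0)

lemma prod_pow_fact_dvd (S : Finset ℕ) (m : ℕ) (hm : m ≠ 0) :
    ∏ p ∈ S, p ^ m.factorization p ∣ m := by
  have h1 : ∏ p ∈ S, p ^ m.factorization p = ∏ p ∈ S ∩ m.primeFactors, p ^ m.factorization p := by
    refine (Finset.prod_subset Finset.inter_subset_left ?_).symm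
    intro p hp hp'
    have : m.factorization p = 0 := by
      by_contra h
      exact hp' (Finset.mem_inter.2 ⟨hp, by
        rw [← Nat.support_factorization]; exact Finsupp.mem_support_iff.2 h⟩)
    simp [this]
  rw [h1]
  calc ∏ p ∈ S ∩ m.primeFactors, p ^ m.factorization p
      ∣ ∏ p ∈ m.primeFactors, p ^ m.factorization p :=
        Finset.prod_dvd_prod_of_subset _ _ _ Finset.inter_subset_right
    _ = m := by
        have := Nat.factorization_prod_pow_eq_self hm
        rwa [Finsupp.prod, Nat.support_factorization] at this

lemma sum_fact_log_le (S : Finset ℕ) (m : ℕ) (hm : m ≠ 0) :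
    ∑ p ∈ S, (m.factorization p : ℝ) * Real.log p ≤ Real.log m := by
  have hdvd := prod_pow_fact_dvd S m hm
  have h1 : ∑ p ∈ S, (m.factorization p : ℝ) * Real.log p
      = Real.log ((∏ p ∈ S, p ^ m.factorization p : ℕ) : ℝ) := by
    push_cast
    rw [Real.log_prod]
    · refine Finset.sum_congr rfl fun p hp => ?_
      rw [Real.log_pow, mul_comm]
    · intro p hp
      rcases Nat.eq_zero_or_pos p with rfl | hp0
      · simp [Nat.factorization_eq_zero_of_not_prime m Nat.not_prime_zero]
      · positivity
  rw [h1]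
  have hpos : 0 < ∏ p ∈ S, p ^ m.factorization p :=
    Nat.pos_of_ne_zero (fun h => hm (by simpa [h] using hdvd))
  exact Real.log_le_log (by exact_mod_cast hpos)
    (by exact_mod_cast Nat.le_of_dvd (Nat.pos_of_ne_zero hm) hdvd)

lemma log_smoothPart_le {y : ℝ} {m : ℕ} {S : Finset ℕ}
    (hS : ∀ p ∈ m.primeFactors, (p : ℝ) ≤ y → p ∈ S) :
    Real.log (smoothPart y m) ≤ ∑ p ∈ S, (m.factorization p : ℝ) * Real.log p := by
  have h1 : Real.log (smoothPart y m)
      = ∑ p ∈ m.primeFactors, (if (p : ℝ) ≤ y then (m.factorization p : ℝ) * Real.log p else 0) := by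
    unfold smoothPart
    push_cast
    rw [Real.log_prod]
    · refine Finset.sum_congr rfl fun p hp => ?_
      rw [Real.log_pow]
      split_ifs
      · rw [mul_comm]
      · simp
    · intro p hp
      have h0 := (Nat.prime_of_mem_primeFactors hp).pos
      have h0' : (0:ℝ) < p := by exact_mod_cast h0
      positivity
  rw [h1, ← Finset.sum_filter]
  refine Finset.sum_le_sum_of_subset_of_nonneg ?_ ?_
  · intro p hp
    rw [Finset.mem_filter] at hp
    exact hS p hp.1 hp.2
  · intro p _ _
    positivity

lemma fact_mono {m n : ℕ} (p : ℕ) (h : m ∣ n) (hn : n ≠ 0) :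
    m.factorization p ≤ n.factorization p := by
  have hm : m ≠ 0 := fun h0 => hn (by simpa [h0] using h)
  exact (Nat.factorization_le_iff_dvd hm hn).2 h p

lemma key_lte {a p d n : ℕ} (ha : 2 ≤ a) (hp : p.Prime) (hpa : ¬ p ∣ a)
    (hd : d = orderOf (a : ZMod p)) (hdn : d ∣ n) (hn : n ≠ 0) :
    (a ^ n - 1).factorization p ≤ (a ^ (2 * d) - 1).factorization p + n.factorization p := by
  haveI : Fact p.Prime := ⟨hp⟩
  have hp2 := hp.two_le
  have ha0 : (a : ZMod p) ≠ 0 := by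
    rwa [Ne, ZMod.natCast_eq_zero_iff]
  have hfin : IsOfFinOrder (a : ZMod p) :=
    isOfFinOrder_iff_pow_eq_one.2 ⟨p - 1, by omega, ZMod.pow_card_sub_one_eq_one ha0⟩
  have hd0 : 0 < d := hd ▸ hfin.orderOf_pos
  have hpad : p ∣ a ^ d - 1 := by
    have h1 : ((a : ZMod p)) ^ d = 1 := hd ▸ pow_orderOf_eq_one _
    have h2 : ((a ^ d - 1 : ℕ) : ZMod p) = 0 := by
      have hge : 1 ≤ a ^ d := Nat.one_le_pow _ _ (by omega)
      push_cast [Nat.cast_sub hge]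
      rw [h1, sub_self]
    exact (ZMod.natCast_eq_zero_iff _ _).1 h2
  have had : a ^ d - 1 ∣ a ^ (2 * d) - 1 := by
    have : a ^ d - 1 ∣ (a ^ d) ^ 2 - 1 ^ 2 := Nat.sub_dvd_pow_sub_pow (a ^ d) 1 2
    simpa [← pow_mul, mul_comm d 2] using this
  have h2d0 : a ^ (2 * d) - 1 ≠ 0 := by
    have : 2 ≤ a ^ (2 * d) := le_trans ha (Nat.le_self_pow (by omega) a)
    omega
  rcases hp.eq_two_or_odd' with rfl | hodd
  · -- p = 2
    have haodd : ¬ (2 : ℕ) ∣ a := hpa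
    have hd1 : d = 1 := by
      have hmod : a % 2 = 1 := Nat.two_dvd_ne_zero.1 haodd
      have : (a : ZMod 2) = 1 := by
        rw [← ZMod.natCast_mod, hmod, Nat.cast_one]
      rw [hd, this, orderOf_one]
    subst hd1
    have hstep1 : (a ^ n - 1).factorization 2 ≤ (a ^ (2 * n) - 1).factorization 2 := by
      refine fact_mono _ ?_ ?_
      · have : a ^ n - 1 ∣ (a ^ n) ^ 2 - 1 ^ 2 := Nat.sub_dvd_pow_sub_pow (a ^ n) 1 2
        simpa [← pow_mul, mul_comm n 2] using this
      · have : 2 ≤ a ^ (2 * n) := le_trans ha (Nat.le_self_pow (by positivity) a)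
        omega
    have hlte := padicValNat.pow_two_sub_pow (x := a) (y := 1) (by omega) (by omega)
        haodd (n := 2 * n) (by positivity) (even_two_mul n)
    simp only [one_pow] at hlte
    have hv2n : padicValNat 2 (2 * n) = 1 + padicValNat 2 n := by
      rw [padicValNat.mul (by norm_num) hn, padicValNat.self (by norm_num)]
    have hsq : a ^ 2 - 1 = (a + 1) * (a - 1) := by
      have := Nat.sq_sub_sq a 1
      simpa using this
    have hsqv : padicValNat 2 (a + 1) + padicValNat 2 (a - 1)
        = padicValNat 2 (a ^ 2 - 1) := by
      rw [hsq, padicValNat.mul (by omega) (by omega)]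
    have hg1 : (a ^ n - 1).factorization 2 = padicValNat 2 (a ^ n - 1) :=
      Nat.factorization_def _ Nat.prime_two
    have hg2 : (a ^ (2 * 1) - 1).factorization 2 = padicValNat 2 (a ^ 2 - 1) := by
      rw [mul_one]; exact Nat.factorization_def _ Nat.prime_two
    have hg3 : n.factorization 2 = padicValNat 2 n := Nat.factorization_def _ Nat.prime_two
    have hg4 : (a ^ (2 * n) - 1).factorization 2 = padicValNat 2 (a ^ (2 * n) - 1) :=
      Nat.factorization_def _ Nat.prime_two
    rw [hg1, hg2, hg3]
    rw [hg1, hg4] at hstep1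
    omega
  · -- p odd
    obtain ⟨k, rfl⟩ := hdn
    have hk0 : k ≠ 0 := by rintro rfl; simp at hn
    have hx1 : 1 < a ^ d := Nat.one_lt_pow (by omega) (by omega)
    have hpx : ¬ p ∣ a ^ d := fun h => hpa (hp.dvd_of_dvd_pow h)
    have hlte := padicValNat.pow_sub_pow (p := p) hodd (x := a ^ d) (y := 1)
        hx1 (by simpa using hpad) hpx hk0
    simp only [one_pow, ← pow_mul] at hlte
    rw [Nat.factorization_def _ hp, Nat.factorization_def _ hp, Nat.factorization_def _ hp, hlte]
    have h1 : padicValNat p (a ^ d - 1) ≤ padicValNat p (a ^ (2 * d) - 1) := by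
      have := fact_mono (p := p) had h2d0
      rwa [Nat.factorization_def _ hp, Nat.factorization_def _ hp] at this
    have h2 : padicValNat p k ≤ padicValNat p (d * k) := by
      have := fact_mono (p := p) ⟨d, mul_comm d k⟩ hn
      rwa [Nat.factorization_def _ hp, Nat.factorization_def _ hp] at this
    omega

lemma sum_log_primesBelow (M : ℕ) :
    ∑ p ∈ (M + 1).primesBelow, Real.log p ≤ M * Real.log 4 := by
  have hset : (M + 1).primesBelow = (Finset.range (M + 1)).filter Nat.Prime := by
    rfl
  have h1 : ∑ p ∈ (M + 1).primesBelow, Real.log p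
      = Real.log ((primorial M : ℕ) : ℝ) := by
    rw [primorial, ← hset]
    push_cast
    rw [Real.log_prod]
    intro p hp
    have := (Nat.prime_of_mem_primesBelow hp).pos
    exact_mod_cast this.ne'
  rw [h1]
  calc Real.log ((primorial M : ℕ) : ℝ) ≤ Real.log ((4 ^ M : ℕ) : ℝ) :=
        Real.log_le_log (by exact_mod_cast (primorial_pos M))
          (by exact_mod_cast primorial_le_4_pow M)
    _ = M * Real.log 4 := by push_cast; rw [Real.log_pow]

lemma log_le_two_sqrt {N : ℝ} (hN : 1 ≤ N) : Real.log N ≤ 2 * Real.sqrt N := by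
  have h1 : Real.log (Real.sqrt N) ≤ Real.sqrt N - 1 :=
    Real.log_le_sub_one_of_pos (Real.sqrt_pos.2 (by linarith))
  rw [Real.log_sqrt (by linarith)] at h1
  nlinarith [Real.sqrt_nonneg N]

lemma card_primesBelow_le {M : ℕ} {N : ℝ} (hM : (M : ℝ) ≤ N) (hN : 2 ≤ N) :
    ((M + 1).primesBelow.card : ℝ) ≤ 6 * N / Real.log N := by
  have hlogN : 0 < Real.log N := Real.log_pos (by linarith)
  set S := (M + 1).primesBelow with hS
  set S1 := S.filter (fun p : ℕ => (p : ℝ) ≤ Real.sqrt N) with hS1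
  set S2 := S.filter (fun p : ℕ => ¬ (p : ℝ) ≤ Real.sqrt N) with hS2
  have hcard : S1.card + S2.card = S.card := Finset.card_filter_add_card_filter_not _
  have h1 : (S1.card : ℝ) ≤ Real.sqrt N + 1 := by
    have hsub : S1 ⊆ Finset.range (⌊Real.sqrt N⌋₊ + 1) := by
      intro p hp
      rw [hS1, Finset.mem_filter] at hp
      exact Finset.mem_range.2 (Nat.lt_succ_of_le (Nat.le_floor hp.2))
    have := Finset.card_le_card hsub
    rw [Finset.card_range] at this
    calc (S1.card : ℝ) ≤ (⌊Real.sqrt N⌋₊ + 1 : ℕ) := by exact_mod_cast this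
      _ ≤ Real.sqrt N + 1 := by
          push_cast
          have := Nat.floor_le (Real.sqrt_nonneg N)
          linarith
  have h2 : (S2.card : ℝ) * (Real.log N / 2) ≤ N * Real.log 4 := by
    have hterm : ∀ p ∈ S2, Real.log N / 2 ≤ Real.log p := by
      intro p hp
      rw [hS2, Finset.mem_filter] at hp
      have h3 : Real.sqrt N < p := lt_of_not_ge hp.2
      have h4 := Real.log_le_log (Real.sqrt_pos.2 (by linarith)) h3.le
      rwa [Real.log_sqrt (by linarith)] at h4
    calc (S2.card : ℝ) * (Real.log N / 2) = ∑ _p ∈ S2, Real.log N / 2 := by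
          rw [Finset.sum_const, nsmul_eq_mul]
      _ ≤ ∑ p ∈ S2, Real.log p := Finset.sum_le_sum hterm
      _ ≤ ∑ p ∈ S, Real.log p := by
          refine Finset.sum_le_sum_of_subset_of_nonneg (Finset.filter_subset _ _) ?_
          intro p _ _; exact Real.log_natCast_nonneg p
      _ ≤ M * Real.log 4 := sum_log_primesBelow M
      _ ≤ N * Real.log 4 := by
          have : (0:ℝ) ≤ Real.log 4 := Real.log_nonneg (by norm_num)
          nlinarith
  rw [le_div_iff₀ hlogN]
  have hc : (S.card : ℝ) = S1.card + S2.card := by exact_mod_cast hcard.symm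
  have l1 : Real.log N ≤ 2 * Real.sqrt N := log_le_two_sqrt (by linarith)
  have l2 : Real.sqrt N * Real.sqrt N = N := Real.mul_self_sqrt (by linarith)
  have l3 : Real.log N ≤ N := by
    have := Real.log_le_sub_one_of_pos (show (0:ℝ) < N by linarith)
    linarith
  have l4 : Real.log 4 ≤ 1.4 := by
    have h4 : (4:ℝ) = 2 ^ 2 := by norm_num
    rw [h4, Real.log_pow]
    have := Real.log_two_lt_d9
    push_cast
    linarith
  have c1nn : (0:ℝ) ≤ S1.card := Nat.cast_nonneg _
  have c2nn : (0:ℝ) ≤ S2.card := Nat.cast_nonneg _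
  have b1 : (S1.card : ℝ) * Real.log N ≤ 3 * N := by nlinarith [Real.sqrt_nonneg N]
  have b2 : (S2.card : ℝ) * Real.log N ≤ 2.8 * N := by nlinarith
  calc (S.card : ℝ) * Real.log N = S1.card * Real.log N + S2.card * Real.log N := by
        rw [hc]; ring
    _ ≤ 3 * N + 2.8 * N := by linarith
    _ ≤ 6 * N := by linarith

theorem sum_log_smooth_part_interval
    (a : ℕ) (ha : 1 < a) :
    ∃ C > 0, ∀ N : ℝ, 2 ≤ N →
      (∑ n ∈ Finset.Ioc ⌊N / 2⌋₊ ⌊N⌋₊, Real.log (smoothPart N (a ^ n - 1))) ≤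
        C * N ^ 2 / Real.log N := by
  have hla : 0 < Real.log a := Real.log_pos (by exact_mod_cast ha)
  refine ⟨12 * Real.log a + 4, by linarith, fun N hN => ?_⟩
  have hN0 : (0:ℝ) < N := by linarith
  have hlogN : 0 < Real.log N := Real.log_pos (by linarith)
  set M := ⌊N⌋₊ with hM
  set I := Finset.Ioc ⌊N / 2⌋₊ M with hI
  set S := (M + 1).primesBelow with hSdef
  have hMN : (M : ℝ) ≤ N := Nat.floor_le hN0.le
  have hfl : 1 ≤ ⌊N / 2⌋₊ := Nat.le_floor (by push_cast; linarith)
  have hnI : ∀ n ∈ I, 2 ≤ n := by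
    intro n hn
    rw [hI, Finset.mem_Ioc] at hn
    omega
  have hm0 : ∀ n ∈ I, a ^ n - 1 ≠ 0 := by
    intro n hn
    have h2 : 2 ≤ a ^ n := le_trans ha (Nat.le_self_pow (by have := hnI n hn; omega) a)
    omega
  -- Step 1 & 2 : bound by double sum and swap
  have step1 : (∑ n ∈ I, Real.log (smoothPart N (a ^ n - 1)))
      ≤ ∑ p ∈ S, ∑ n ∈ I, ((a ^ n - 1).factorization p : ℝ) * Real.log p := by
    rw [Finset.sum_comm]
    refine Finset.sum_le_sum fun n hn => ?_
    refine log_smoothPart_le fun p hp hpy => ?_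
    have hprime := Nat.prime_of_mem_primeFactors hp
    have : p ≤ M := Nat.le_floor hpy
    exact Nat.mem_primesBelow.2 ⟨by omega, hprime⟩
  -- per-prime bound
  have perp : ∀ p ∈ S,
      ∑ n ∈ I, ((a ^ n - 1).factorization p : ℝ) * Real.log p
      ≤ (M / orderOf (a : ZMod p) : ℕ) *
          (((a ^ (2 * orderOf (a : ZMod p)) - 1).factorization p : ℝ) * Real.log p)
        + ∑ n ∈ I, (n.factorization p : ℝ) * Real.log p := by
    intro p hpS
    have hp := Nat.prime_of_mem_primesBelow hpS
    set d := orderOf (a : ZMod p) with hd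
    by_cases hpa : p ∣ a
    · -- LHS is zero
      have hz : ∀ n ∈ I, ((a ^ n - 1).factorization p : ℝ) * Real.log p = 0 := by
        intro n hn
        have hnd : ¬ p ∣ a ^ n - 1 := by
          intro hdvd
          have h1 : p ∣ a ^ n := dvd_pow hpa (by have := hnI n hn; omega)
          have h2 : a ^ n - (a ^ n - 1) = 1 := by
            have : 1 ≤ a ^ n := Nat.one_le_pow _ _ (by omega)
            omega
          have h3 := Nat.dvd_sub h1 hdvd
          rw [h2] at h3
          have := Nat.le_of_dvd one_pos h3
          have := hp.two_le
          omega
        rw [Nat.factorization_eq_zero_of_not_dvd hnd]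
        simp
      rw [Finset.sum_eq_zero hz]
      have h1 : (0:ℝ) ≤ (M / d : ℕ) *
          (((a ^ (2 * d) - 1).factorization p : ℝ) * Real.log p) := by
        have := Real.log_natCast_nonneg p
        positivity
      have h2 : (0:ℝ) ≤ ∑ n ∈ I, (n.factorization p : ℝ) * Real.log p := by
        refine Finset.sum_nonneg fun n _ => ?_
        have := Real.log_natCast_nonneg p
        positivity
      linarith
    · -- p does not divide a
      have hzero : ∀ n ∈ I, ¬ d ∣ n → ((a ^ n - 1).factorization p : ℝ) * Real.log p = 0 := by
        intro n hn hdn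
        have hnd : ¬ p ∣ a ^ n - 1 := by
          intro hdvd
          apply hdn
          haveI : Fact p.Prime := ⟨hp⟩
          have hcast : ((a ^ n - 1 : ℕ) : ZMod p) = 0 :=
            (ZMod.natCast_eq_zero_iff _ _).2 hdvd
          have hge : 1 ≤ a ^ n := Nat.one_le_pow _ _ (by omega)
          rw [Nat.cast_sub hge] at hcast
          push_cast at hcast
          have hone : (a : ZMod p) ^ n = 1 := by
            have := sub_eq_zero.1 hcast
            exact_mod_cast this
          exact orderOf_dvd_of_pow_eq_one hone
        rw [Nat.factorization_eq_zero_of_not_dvd hnd]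
        simp
      rw [← Finset.sum_filter_add_sum_filter_not I (fun n => d ∣ n)]
      have hz2 : ∑ n ∈ I.filter (fun n => ¬ d ∣ n), ((a ^ n - 1).factorization p : ℝ) * Real.log p = 0 := by
        refine Finset.sum_eq_zero fun n hn => ?_
        rw [Finset.mem_filter] at hn
        exact hzero n hn.1 hn.2
      rw [hz2, add_zero]
      have hbound : ∀ n ∈ I.filter (fun n => d ∣ n),
          ((a ^ n - 1).factorization p : ℝ) * Real.log p
          ≤ (((a ^ (2 * d) - 1).factorization p : ℝ) + (n.factorization p : ℝ)) * Real.log p := by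
        intro n hn
        rw [Finset.mem_filter] at hn
        have hkey := key_lte (show 2 ≤ a by omega) hp hpa hd hn.2 (by have := hnI n hn.1; omega)
        have hlp := Real.log_natCast_nonneg p
        have : ((a ^ n - 1).factorization p : ℝ)
            ≤ ((a ^ (2 * d) - 1).factorization p : ℝ) + (n.factorization p : ℝ) := by
          exact_mod_cast hkey
        nlinarith
      calc ∑ n ∈ I.filter (fun n => d ∣ n), ((a ^ n - 1).factorization p : ℝ) * Real.log p
          ≤ ∑ n ∈ I.filter (fun n => d ∣ n),
              ((((a ^ (2 * d) - 1).factorization p : ℝ) + (n.factorization p : ℝ)) * Real.log p) :=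
            Finset.sum_le_sum hbound
        _ = (I.filter (fun n => d ∣ n)).card *
              (((a ^ (2 * d) - 1).factorization p : ℝ) * Real.log p)
            + ∑ n ∈ I.filter (fun n => d ∣ n), (n.factorization p : ℝ) * Real.log p := by
            simp only [add_mul]
            rw [Finset.sum_add_distrib, Finset.sum_const, nsmul_eq_mul]
        _ ≤ (M / d : ℕ) * (((a ^ (2 * d) - 1).factorization p : ℝ) * Real.log p)
            + ∑ n ∈ I, (n.factorization p : ℝ) * Real.log p := by
            have hlp := Real.log_natCast_nonneg p
            refine add_le_add ?_ ?_
            · refine mul_le_mul_of_nonneg_right ?_ (by positivity)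
              have hcard : (I.filter (fun n => d ∣ n)).card ≤ M / d := by
                have hsub : I.filter (fun n => d ∣ n)
                    ⊆ (Finset.Ioc 0 M).filter (fun n => d ∣ n) :=
                  Finset.filter_subset_filter _ (by
                    rw [hI]; exact Finset.Ioc_subset_Ioc (Nat.zero_le _) le_rfl)
                have := Finset.card_le_card hsub
                rwa [Nat.Ioc_filter_dvd_card_eq_div] at this
              exact_mod_cast hcard
            · refine Finset.sum_le_sum_of_subset_of_nonneg (Finset.filter_subset _ _) ?_
              intro n _ _
              have hlp := Real.log_natCast_nonneg p
              positivity
  -- regroup the first part by the order d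
  have hA : ∑ p ∈ S, ((M / orderOf (a : ZMod p) : ℕ) : ℝ) *
        (((a ^ (2 * orderOf (a : ZMod p)) - 1).factorization p : ℝ) * Real.log p)
      ≤ (S.card : ℝ) * (2 * N * Real.log a) := by
    set g : ℕ → ℕ := fun p => orderOf (a : ZMod p) with hg
    set T := S.image g with hT
    have hmaps : ∀ p ∈ S, g p ∈ T := fun p hp => Finset.mem_image_of_mem g hp
    rw [← Finset.sum_fiberwise_of_maps_to hmaps]
    have hfiber : ∀ d ∈ T,
        ∑ p ∈ S.filter (fun p => g p = d), ((M / g p : ℕ) : ℝ) *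
          (((a ^ (2 * g p) - 1).factorization p : ℝ) * Real.log p)
        ≤ 2 * N * Real.log a := by
      intro d hd
      have hrw : ∑ p ∈ S.filter (fun p => g p = d), ((M / g p : ℕ) : ℝ) *
            (((a ^ (2 * g p) - 1).factorization p : ℝ) * Real.log p)
          = ((M / d : ℕ) : ℝ) * ∑ p ∈ S.filter (fun p => g p = d),
            (((a ^ (2 * d) - 1).factorization p : ℝ) * Real.log p) := by
        rw [Finset.mul_sum]
        refine Finset.sum_congr rfl fun p hp => ?_
        rw [Finset.mem_filter] at hp
        rw [hp.2]
      rw [hrw]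
      rcases Nat.eq_zero_or_pos d with rfl | hd0
      · simp
        positivity
      · have hd0' : (0:ℝ) < d := by exact_mod_cast hd0
        have hm2d : a ^ (2 * d) - 1 ≠ 0 := by
          have : 2 ≤ a ^ (2 * d) := le_trans ha (Nat.le_self_pow (by omega) a)
          omega
        have hsum := sum_fact_log_le (S.filter (fun p => g p = d)) _ hm2d
        have hlog2d : Real.log ((a ^ (2 * d) - 1 : ℕ) : ℝ) ≤ (2 * d) * Real.log a := by
          calc Real.log ((a ^ (2 * d) - 1 : ℕ) : ℝ) ≤ Real.log ((a ^ (2 * d) : ℕ) : ℝ) := by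
                refine Real.log_le_log ?_ ?_
                · exact_mod_cast Nat.pos_of_ne_zero hm2d
                · exact_mod_cast Nat.sub_le _ _
            _ = (2 * d) * Real.log a := by push_cast; rw [Real.log_pow]; push_cast; ring
        have hcd : ((M / d : ℕ) : ℝ) ≤ N / d := by
          calc ((M / d : ℕ) : ℝ) ≤ (M : ℝ) / d := Nat.cast_div_le
            _ ≤ N / d := by gcongr
        have hsn : (0:ℝ) ≤ ∑ p ∈ S.filter (fun p => g p = d),
            (((a ^ (2 * d) - 1).factorization p : ℝ) * Real.log p) := by
          refine Finset.sum_nonneg fun p _ => ?_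
          have := Real.log_natCast_nonneg p
          positivity
        calc ((M / d : ℕ) : ℝ) * ∑ p ∈ S.filter (fun p => g p = d),
              (((a ^ (2 * d) - 1).factorization p : ℝ) * Real.log p)
            ≤ (N / d) * ((2 * d) * Real.log a) := by
              refine mul_le_mul hcd (hsum.trans hlog2d) hsn ?_
              positivity
          _ = 2 * N * Real.log a := by field_simp
    calc ∑ d ∈ T, ∑ p ∈ S.filter (fun p => g p = d), ((M / g p : ℕ) : ℝ) *
          (((a ^ (2 * g p) - 1).factorization p : ℝ) * Real.log p)
        ≤ ∑ _d ∈ T, 2 * N * Real.log a := Finset.sum_le_sum hfiber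
      _ = (T.card : ℝ) * (2 * N * Real.log a) := by rw [Finset.sum_const, nsmul_eq_mul]
      _ ≤ (S.card : ℝ) * (2 * N * Real.log a) := by
          have := Finset.card_image_le (s := S) (f := g)
          have h2 : (T.card : ℝ) ≤ S.card := by exact_mod_cast this
          have : (0:ℝ) ≤ 2 * N * Real.log a := by positivity
          nlinarith
  -- the second part
  have hB : ∑ p ∈ S, ∑ n ∈ I, (n.factorization p : ℝ) * Real.log p ≤ N * Real.log N := by
    rw [Finset.sum_comm]
    calc ∑ n ∈ I, ∑ p ∈ S, (n.factorization p : ℝ) * Real.log p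
        ≤ ∑ n ∈ I, Real.log n := by
          refine Finset.sum_le_sum fun n hn => ?_
          exact sum_fact_log_le S n (by have := hnI n hn; omega)
      _ ≤ ∑ _n ∈ I, Real.log N := by
          refine Finset.sum_le_sum fun n hn => ?_
          refine Real.log_le_log ?_ ?_
          · have := hnI n hn
            exact_mod_cast by omega
          · rw [hI, Finset.mem_Ioc] at hn
            calc (n:ℝ) ≤ M := by exact_mod_cast hn.2
              _ ≤ N := hMN
      _ = (I.card : ℝ) * Real.log N := by rw [Finset.sum_const, nsmul_eq_mul]
      _ ≤ N * Real.log N := by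
          have hIc : I.card ≤ M := by
            rw [hI, Nat.card_Ioc]
            omega
          have : (I.card : ℝ) ≤ N := le_trans (by exact_mod_cast hIc) hMN
          nlinarith
  -- Chebyshev
  have hcheb : (S.card : ℝ) ≤ 6 * N / Real.log N := card_primesBelow_le hMN hN
  -- put everything together
  have htot : (∑ n ∈ I, Real.log (smoothPart N (a ^ n - 1)))
      ≤ (6 * N / Real.log N) * (2 * N * Real.log a) + N * Real.log N := by
    have hstep2 := Finset.sum_le_sum perp
    have h3 : ∑ p ∈ S, ((M / orderOf (a : ZMod p) : ℕ) : ℝ) *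
          (((a ^ (2 * orderOf (a : ZMod p)) - 1).factorization p : ℝ) * Real.log p)
        ≤ (6 * N / Real.log N) * (2 * N * Real.log a) := by
      refine hA.trans ?_
      have : (0:ℝ) ≤ 2 * N * Real.log a := by positivity
      nlinarith
    have h4 := Finset.sum_add_distrib (s := S)
      (f := fun p => ((M / orderOf (a : ZMod p) : ℕ) : ℝ) *
          (((a ^ (2 * orderOf (a : ZMod p)) - 1).factorization p : ℝ) * Real.log p))
      (g := fun p => ∑ n ∈ I, (n.factorization p : ℝ) * Real.log p)
    calc (∑ n ∈ I, Real.log (smoothPart N (a ^ n - 1)))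
        ≤ ∑ p ∈ S, ∑ n ∈ I, ((a ^ n - 1).factorization p : ℝ) * Real.log p := step1
      _ ≤ ∑ p ∈ S, (((M / orderOf (a : ZMod p) : ℕ) : ℝ) *
            (((a ^ (2 * orderOf (a : ZMod p)) - 1).factorization p : ℝ) * Real.log p)
          + ∑ n ∈ I, (n.factorization p : ℝ) * Real.log p) := hstep2
      _ = (∑ p ∈ S, ((M / orderOf (a : ZMod p) : ℕ) : ℝ) *
            (((a ^ (2 * orderOf (a : ZMod p)) - 1).factorization p : ℝ) * Real.log p))
          + ∑ p ∈ S, ∑ n ∈ I, (n.factorization p : ℝ) * Real.log p := h4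
      _ ≤ (6 * N / Real.log N) * (2 * N * Real.log a) + N * Real.log N := add_le_add h3 hB
  refine htot.trans ?_
  have hNlogN : N * Real.log N ≤ 4 * N ^ 2 / Real.log N := by
    rw [le_div_iff₀ hlogN]
    have l1 : Real.log N ≤ 2 * Real.sqrt N := log_le_two_sqrt (by linarith)
    have l2 : Real.sqrt N * Real.sqrt N = N := Real.mul_self_sqrt (by linarith)
    have h1 : Real.log N * Real.log N ≤ 4 * N := by
      nlinarith [Real.sqrt_nonneg N, hlogN.le]
    nlinarith [mul_le_mul_of_nonneg_left h1 hN0.le]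
  have hfirst : (6 * N / Real.log N) * (2 * N * Real.log a)
      = 12 * Real.log a * N ^ 2 / Real.log N := by
    field_simp
    ring
  rw [hfirst]
  have : (12 * Real.log a + 4) * N ^ 2 / Real.log N
      = 12 * Real.log a * N ^ 2 / Real.log N + 4 * N ^ 2 / Real.log N := by
    field_simp
  rw [this]
  exact add_le_add le_rfl hNlogN
end

section
/- Let a > 1 be an integer, i ≥ 0 an integer, and y, L ≥ 1 reals. The number of primes p with ord_p(a) ∈ (2^i, 2^{i+1}] and ν_p(a^{ord_p(a)} - 1) ≥ 2^i/(y·L) is O(2^i · y · L · log a). -/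
lemma aux_prod_pow_dvd (N c : ℕ) :
    ∀ (F : Finset ℕ), (∀ p ∈ F, p.Prime) → (∀ p ∈ F, p ^ c ∣ N) →
      (∏ p ∈ F, p ^ c) ∣ N := by
  intro F
  induction F using Finset.induction_on with
  | empty => intro _ _; simpa using one_dvd N
  | insert q s hqs ih =>
    intro hF hd
    rw [Finset.prod_insert hqs]
    have hq := hF q (Finset.mem_insert_self q s)
    have hcop : Nat.Coprime (q ^ c) (∏ p ∈ s, p ^ c) := by
      have h1 : Nat.Coprime q (∏ p ∈ s, p ^ c) := by
        apply Nat.Coprime.prod_right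
        intro p hps
        exact ((Nat.coprime_primes hq (hF p (Finset.mem_insert_of_mem hps))).mpr
          (by rintro rfl; exact hqs hps)).pow_right c
      exact h1.pow_left c
    exact hcop.mul_dvd_of_dvd_of_dvd (hd q (Finset.mem_insert_self q s))
      (ih (fun p hp => hF p (Finset.mem_insert_of_mem hp))
        (fun p hp => hd p (Finset.mem_insert_of_mem hp)))

theorem card_primes_dyadic_large_valuation :
    ∃ C > 0, ∀ (a : ℕ) (i : ℕ) (y L : ℝ), 1 < a → 1 ≤ y → 1 ≤ L →
      {p : ℕ | p.Prime ∧ ¬ p ∣ a ∧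
          orderOf (a : ZMod p) ∈ Set.Ioc (2 ^ i) (2 ^ (i + 1)) ∧
          (2 : ℝ) ^ i / (y * L) ≤
            ((a ^ (orderOf (a : ZMod p)) - 1).factorization p : ℝ)}.Finite ∧
      (Nat.card {p : ℕ | p.Prime ∧ ¬ p ∣ a ∧
          orderOf (a : ZMod p) ∈ Set.Ioc (2 ^ i) (2 ^ (i + 1)) ∧
          (2 : ℝ) ^ i / (y * L) ≤
            ((a ^ (orderOf (a : ZMod p)) - 1).factorization p : ℝ)} : ℝ) ≤
        C * 2 ^ i * y * L * Real.log a := by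
  have hlog2 : (0:ℝ) < Real.log 2 := Real.log_pos one_lt_two
  refine ⟨2 / Real.log 2, by positivity, ?_⟩
  intro a i y L ha hy hL
  have hy0 : (0:ℝ) < y := lt_of_lt_of_le one_pos hy
  have hL0 : (0:ℝ) < L := lt_of_lt_of_le one_pos hL
  have hyL : (0:ℝ) < y * L := mul_pos hy0 hL0
  set S := {p : ℕ | p.Prime ∧ ¬ p ∣ a ∧
      orderOf (a : ZMod p) ∈ Set.Ioc (2 ^ i) (2 ^ (i + 1)) ∧
      (2 : ℝ) ^ i / (y * L) ≤
        ((a ^ (orderOf (a : ZMod p)) - 1).factorization p : ℝ)} with hS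
  set c : ℕ := ⌈(2:ℝ) ^ i / (y * L)⌉₊ with hc
  have hc1 : 1 ≤ c := Nat.one_le_ceil_iff.mpr (by positivity)
  set N : ℕ := ∏ ℓ ∈ Finset.Ioc (2 ^ i) (2 ^ (i + 1)), (a ^ ℓ - 1) with hN
  have hNpos : 0 < N := by
    apply Finset.prod_pos
    intro ℓ hℓ
    have hℓ1 : 1 ≤ ℓ := le_trans (Nat.one_le_two_pow) (le_of_lt (Finset.mem_Ioc.mp hℓ).1)
    have : 1 < a ^ ℓ := Nat.one_lt_pow (by omega) ha
    omega
  -- key properties of elements of S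
  have key : ∀ p ∈ S, p.Prime ∧ p ^ c ∣ N := by
    intro p hp
    obtain ⟨hpp, -, hord, hval⟩ := hp
    set d := orderOf (a : ZMod p) with hd
    have hd1 : 1 ≤ d := le_trans Nat.one_le_two_pow (le_of_lt hord.1)
    have hne : a ^ d - 1 ≠ 0 := by
      have : 1 < a ^ d := Nat.one_lt_pow (by omega) ha
      omega
    have hνc : c ≤ (a ^ d - 1).factorization p := Nat.ceil_le.mpr hval
    have hpc : p ^ c ∣ a ^ d - 1 :=
      (Nat.Prime.pow_dvd_iff_le_factorization hpp hne).mpr hνc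
    have hdvdN : a ^ d - 1 ∣ N :=
      Finset.dvd_prod_of_mem _ (Finset.mem_Ioc.mpr hord)
    exact ⟨hpp, hpc.trans hdvdN⟩
  have hfin : S.Finite := by
    apply Set.Finite.subset N.primeFactors.finite_toSet
    intro p hp
    obtain ⟨hpp, hpc⟩ := key p hp
    have hpN : p ∣ N := (dvd_pow_self p (by omega : c ≠ 0)).trans hpc
    simpa [Nat.mem_primeFactors] using ⟨hpp, hpN, hNpos.ne'⟩
  refine ⟨hfin, ?_⟩
  rw [Nat.card_eq_card_finite_toFinset hfin]
  set F := hfin.toFinset with hF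
  have hmem : ∀ p, p ∈ F ↔ p ∈ S := fun p => hfin.mem_toFinset
  have hprod : (∏ p ∈ F, p ^ c) ∣ N :=
    aux_prod_pow_dvd N c F (fun p hp => (key p ((hmem p).mp hp)).1)
      (fun p hp => (key p ((hmem p).mp hp)).2)
  have h2pow : 2 ^ (c * F.card) ≤ N := by
    calc 2 ^ (c * F.card) = ∏ _p ∈ F, 2 ^ c := by
          rw [Finset.prod_const, ← pow_mul, mul_comm]
      _ ≤ ∏ p ∈ F, p ^ c := Finset.prod_le_prod' fun p hp =>
          Nat.pow_le_pow_left ((key p ((hmem p).mp hp)).1.two_le) c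
      _ ≤ N := Nat.le_of_dvd hNpos hprod
  have hNle : N ≤ a ^ (2 ^ i * 2 ^ (i + 1)) := by
    calc N ≤ ∏ ℓ ∈ Finset.Ioc (2 ^ i) (2 ^ (i + 1)), a ^ ℓ :=
          Finset.prod_le_prod' fun ℓ _ => Nat.sub_le _ _
      _ = a ^ (∑ ℓ ∈ Finset.Ioc (2 ^ i) (2 ^ (i + 1)), ℓ) :=
          Finset.prod_pow_eq_pow_sum _ _ _
      _ ≤ a ^ (2 ^ i * 2 ^ (i + 1)) := by
          apply Nat.pow_le_pow_right (le_of_lt ha)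
          calc ∑ ℓ ∈ Finset.Ioc (2 ^ i) (2 ^ (i + 1)), ℓ
              ≤ (Finset.Ioc (2 ^ i) (2 ^ (i + 1))).card • (2 ^ (i + 1)) :=
                Finset.sum_le_card_nsmul _ _ _ fun ℓ hℓ => (Finset.mem_Ioc.mp hℓ).2
            _ = 2 ^ i * 2 ^ (i + 1) := by
                rw [Nat.card_Ioc, smul_eq_mul]; congr 1; rw [pow_succ]; omega
  have hnat : 2 ^ (c * F.card) ≤ a ^ (2 ^ i * 2 ^ (i + 1)) := h2pow.trans hNle
  -- pass to reals
  have hreal : ((c * F.card : ℕ) : ℝ) * Real.log 2 ≤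
      ((2 ^ i * 2 ^ (i + 1) : ℕ) : ℝ) * Real.log a := by
    have h1 : ((2:ℝ)) ^ (c * F.card) ≤ ((a:ℝ)) ^ (2 ^ i * 2 ^ (i + 1)) := by
      exact_mod_cast hnat
    have := Real.log_le_log (by positivity) h1
    rwa [Real.log_pow, Real.log_pow] at this
  have hloga : (0:ℝ) < Real.log a := Real.log_pos (by exact_mod_cast ha)
  have hcyl : (2:ℝ) ^ i ≤ (c : ℝ) * (y * L) := by
    have h := Nat.le_ceil ((2:ℝ) ^ i / (y * L))
    rw [div_le_iff₀ hyL] at h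
    exact h
  have hcR : (1:ℝ) ≤ (c:ℝ) := by exact_mod_cast hc1
  push_cast at hreal
  have h2i : ((2:ℝ)) ^ (i+1) = 2 * 2 ^ i := by ring
  rw [h2i] at hreal
  -- hreal : c * F.card * log 2 ≤ 2^i * (2 * 2^i) * log a
  have hstep : (c:ℝ) * (F.card : ℝ) * Real.log 2 ≤
      (c:ℝ) * (2 / Real.log 2 * 2 ^ i * y * L * Real.log a * Real.log 2) := by
    have h3 : (2:ℝ) ^ i * (2 * 2 ^ i) * Real.log a ≤
        2 ^ i * (2 * ((c:ℝ) * (y * L))) * Real.log a := by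
      have := mul_le_mul_of_nonneg_left hcyl (by positivity : (0:ℝ) ≤ 2 * (2:ℝ)^i)
      nlinarith [hloga.le, this]
    calc (c:ℝ) * (F.card : ℝ) * Real.log 2 ≤ 2 ^ i * (2 * ((c:ℝ) * (y * L))) * Real.log a :=
          hreal.trans h3
      _ = (c:ℝ) * (2 / Real.log 2 * 2 ^ i * y * L * Real.log a * Real.log 2) := by
          field_simp
  have := le_of_mul_le_mul_left (by rwa [mul_assoc] at hstep : (c:ℝ) * ((F.card:ℝ) * Real.log 2) ≤ (c:ℝ) * (2 / Real.log 2 * 2 ^ i * y * L * Real.log a * Real.log 2)) (by linarith : (0:ℝ) < (c:ℝ))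
  calc (F.card : ℝ) = ((F.card:ℝ) * Real.log 2) / Real.log 2 := by field_simp
    _ ≤ (2 / Real.log 2 * 2 ^ i * y * L * Real.log a * Real.log 2) / Real.log 2 := by
        gcongr
    _ = 2 / Real.log 2 * 2 ^ i * y * L * Real.log a := by field_simp
end

section
/- Assume the ABC conjecture. Let a > 1 be an integer, 1 < c < a real, K ≥ 1. Then there is a constant C = C(a,c,K) > 0 such that for all sufficiently large n, if s_{Kn}(a^n - 1) > c^n then Σ_{p ≤ Kn, p ∣ a^n - 1} log p ≥ C·n. -/
/-- The radical of an integer: product of its distinct prime factors. -/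
def intRadical (m : ℤ) : ℕ := ∏ p ∈ m.natAbs.primeFactors, p

/-- The ABC conjecture. -/
def ABCConjecture : Prop :=
  ∀ ε : ℝ, 0 < ε → ∃ Kε : ℝ, 0 < Kε ∧
    ∀ A B C : ℤ, A ≠ 0 → B ≠ 0 → C ≠ 0 → IsCoprime A B → A + B = C →
      (max |A| (max |B| |C|) : ℝ) ≤ Kε * (intRadical (A * B * C) : ℝ) ^ (1 + ε)

lemma prod_pow_factorization' (m : ℕ) (hm : m ≠ 0) :
    ∏ p ∈ m.primeFactors, p ^ m.factorization p = m := by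
  conv_lhs => rw [← Nat.support_factorization]
  exact Nat.factorization_prod_pow_eq_self hm

theorem abc_implies_sum_log_primes_large
    (hABC : ABCConjecture)
    (a : ℕ) (ha : 1 < a) (c : ℝ) (hc1 : 1 < c) (hca : c < a) (K : ℝ) (hK : 1 ≤ K) :
    ∃ C > 0, ∃ N₀ : ℕ, ∀ n : ℕ, N₀ ≤ n →
      (c : ℝ) ^ n < (smoothPart (K * (n : ℝ)) (a ^ n - 1) : ℝ) →
      C * n ≤ ∑ p ∈ (Finset.range (⌊K * (n : ℝ)⌋₊ + 1)).filter
          (fun p : ℕ => p.Prime ∧ (p : ℝ) ≤ K * (n : ℝ) ∧ p ∣ a ^ n - 1), Real.log p := by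
  have ha0 : (1:ℝ) < (a:ℝ) := by exact_mod_cast ha
  set La := Real.log a with hLa
  set Lc := Real.log c with hLcdef
  have hLc0 : 0 < Lc := Real.log_pos hc1
  have hLaLc : Lc < La := Real.log_lt_log (by linarith) hca
  set ε := Lc / (2 * (La - Lc)) with hεdef
  have hε0 : 0 < ε := div_pos hLc0 (by linarith)
  obtain ⟨Kε, hKε, habc⟩ := hABC ε hε0
  set D := Real.log Kε / (1 + ε) + La with hDdef
  have hεmul : ε * (La - Lc) = Lc / 2 := by
    have hne : La - Lc ≠ 0 := by linarith
    rw [hεdef]; field_simp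
  have hkey : La - (1 + ε) * (La - Lc) = Lc / 2 := by
    have h2 : (1 + ε) * (La - Lc) = (La - Lc) + ε * (La - Lc) := by ring
    linarith
  refine ⟨Lc / (4 * (1 + ε)), div_pos hLc0 (by linarith), max 1 (⌈4 * (1 + ε) * D / Lc⌉₊ + 1), ?_⟩
  intro n hn
  have hn1 : 1 ≤ n := le_trans (le_max_left _ _) hn
  have hnlarge : 4 * (1 + ε) * D / Lc ≤ (n : ℝ) := by
    have h1 : (⌈4 * (1 + ε) * D / Lc⌉₊ + 1 : ℕ) ≤ n := le_trans (le_max_right _ _) hn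
    have := Nat.le_ceil (4 * (1 + ε) * D / Lc)
    have h2 : ((⌈4 * (1 + ε) * D / Lc⌉₊ : ℝ) + 1) ≤ (n : ℝ) := by exact_mod_cast h1
    linarith
  set y := K * (n : ℝ) with hy
  set m := a ^ n - 1 with hmdef
  intro hsmooth
  have hapow : 2 ≤ a ^ n := le_trans ha (Nat.le_self_pow (by omega) a)
  have hm0 : m ≠ 0 := by omega
  set P := m.primeFactors with hP
  set S := P.filter (fun p : ℕ => (p : ℝ) ≤ y) with hS
  set R := ∏ p ∈ S, p with hRdef
  set t := ∏ p ∈ P.filter (fun p : ℕ => ¬ (p : ℝ) ≤ y), p ^ m.factorization p with htdef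
  have hst : smoothPart y m * t = m := by
    rw [smoothPart, htdef]
    have h1 : ∏ p ∈ m.primeFactors, p ^ (if (p : ℝ) ≤ y then m.factorization p else 0)
        = ∏ p ∈ S, p ^ m.factorization p := by
      rw [hS, Finset.prod_filter]
      refine Finset.prod_congr rfl fun p _ => ?_
      split_ifs <;> simp
    rw [h1, hS, Finset.prod_filter_mul_prod_filter_not]
    exact prod_pow_factorization' m hm0
  have hprimeP : ∀ p ∈ P, p.Prime := fun p hp => Nat.prime_of_mem_primeFactors hp
  have hRpos : 0 < R := Finset.prod_pos fun p hp =>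
    (hprimeP p (Finset.mem_of_mem_filter p hp)).pos
  have htpos : 0 < t := Finset.prod_pos fun p hp =>
    pow_pos (hprimeP p (Finset.mem_of_mem_filter p hp)).pos _
  -- radical of m is at most R * t
  have hradm : ∏ p ∈ P, p ≤ R * t := by
    rw [← Finset.prod_filter_mul_prod_filter_not P (fun p : ℕ => (p : ℝ) ≤ y) (fun p : ℕ => p)]
    rw [← hS, ← hRdef]
    refine Nat.mul_le_mul_left R ?_
    refine Finset.prod_le_prod' fun p hp => ?_
    have hpP := Finset.mem_of_mem_filter p hp
    have hpp := hprimeP p hpP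
    have hfp : m.factorization p ≠ 0 := by
      simp only [hP, Nat.mem_primeFactors] at hpP
      exact (Nat.Prime.factorization_pos_of_dvd hpP.1 hm0 hpP.2.1).ne'
    exact Nat.le_self_pow hfp p
  -- ABC application
  have hmZ : ((m : ℤ)) = (a : ℤ) ^ n - 1 := by
    rw [hmdef]
    push_cast [Nat.cast_sub (le_trans one_le_two hapow)]
    ring
  have habcres := habc 1 (m : ℤ) ((a : ℤ) ^ n) one_ne_zero
    (by exact_mod_cast hm0) (by positivity) (isCoprime_one_left)
    (by rw [hmZ]; ring)
  -- bound the radical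
  have hradnat : intRadical (1 * (m : ℤ) * ((a : ℤ) ^ n)) ≤ R * t * a := by
    have hnatAbs : (1 * (m : ℤ) * ((a : ℤ) ^ n)).natAbs = m * a ^ n := by
      simp [Int.natAbs_mul, Int.natAbs_pow]
    rw [intRadical, hnatAbs]
    have hPF : (m * a ^ n).primeFactors = P ∪ a.primeFactors := by
      rw [Nat.primeFactors_mul hm0 (by positivity), Nat.primeFactors_pow _ (by omega), hP]
    rw [hPF]
    have h1 : ∏ p ∈ P ∪ a.primeFactors, p ≤ (∏ p ∈ P, p) * ∏ p ∈ a.primeFactors, p := by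
      rw [← Finset.union_sdiff_self_eq_union, Finset.prod_union Finset.disjoint_sdiff]
      refine Nat.mul_le_mul_left _ ?_
      refine Finset.prod_le_prod_of_subset_of_one_le' (Finset.sdiff_subset) ?_
      exact fun p hp _ => (Nat.prime_of_mem_primeFactors hp).one_lt.le
    refine le_trans h1 (Nat.mul_le_mul hradm ?_)
    exact Nat.le_of_dvd (by omega) (Nat.prod_primeFactors_dvd a)
  -- real bound on t
  have htr : (t : ℝ) ≤ (a : ℝ) ^ n / c ^ n := by
    rw [le_div_iff₀ (by positivity)]
    calc (t : ℝ) * c ^ n ≤ (t : ℝ) * (smoothPart y m : ℝ) := by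
          exact mul_le_mul_of_nonneg_left hsmooth.le (by positivity)
      _ = (m : ℝ) := by
          rw [mul_comm, ← Nat.cast_mul, hst]
      _ ≤ (a : ℝ) ^ n := by
          have : m ≤ a ^ n := by omega
          exact_mod_cast this
  -- main inequality
  have hmain : (a : ℝ) ^ n ≤ Kε * ((R : ℝ) * ((a : ℝ) ^ n / c ^ n) * a) ^ (1 + ε) := by
    have h3 : (a : ℝ) ^ n ≤ Kε * ((intRadical (1 * (m:ℤ) * ((a:ℤ)^n)) : ℕ) : ℝ) ^ (1 + ε) := by
      refine le_trans ?_ habcres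
      have h2 : (a : ℝ) ^ n ≤ |(((a:ℤ)^n : ℤ) : ℝ)| := by
        push_cast
        exact le_abs_self _
      exact le_trans h2 (le_max_of_le_right (le_max_right _ _))
    refine le_trans h3 (mul_le_mul_of_nonneg_left ?_ hKε.le)
    refine Real.rpow_le_rpow (Nat.cast_nonneg _) ?_ (by linarith)
    have hr1 : ((intRadical (1 * (m:ℤ) * ((a:ℤ)^n)) : ℕ) : ℝ) ≤ ((R * t * a : ℕ) : ℝ) :=
      Nat.cast_le.2 hradnat
    refine le_trans hr1 ?_
    push_cast
    have hRc : (0:ℝ) ≤ (R:ℝ) := Nat.cast_nonneg _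
    have hac : (0:ℝ) ≤ (a:ℝ) := Nat.cast_nonneg _
    gcongr
  -- take logarithms
  set x := Real.log (R : ℝ) with hx
  have hlog := Real.log_le_log (by positivity) hmain
  have hRpos' : (0:ℝ) < (R:ℝ) := by exact_mod_cast hRpos
  rw [Real.log_mul hKε.ne' (by positivity),
      Real.log_rpow (by positivity),
      Real.log_mul (by positivity) (by positivity),
      Real.log_mul (by positivity) (by positivity),
      Real.log_div (by positivity) (by positivity),
      Real.log_pow, Real.log_pow] at hlog
  have hlogK : Real.log Kε = (1+ε) * (D - La) := by
    rw [hDdef]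
    field_simp
    ring
  have h4 : (n:ℝ) * (Lc/2) - (1+ε)*D ≤ (1+ε) * x := by
    have expand : (n:ℝ) * (Lc/2) - (1+ε)*D
        = (n:ℝ) * (La - (1+ε)*(La-Lc)) - Real.log Kε - (1+ε)*La := by
      rw [hkey, hlogK]; ring
    rw [expand]
    linarith [hlog]
  have hnLc : 4*(1+ε)*D ≤ (n:ℝ) * Lc := by
    rw [div_le_iff₀ hLc0] at hnlarge
    linarith [hnlarge]
  clear_value La Lc ε D x
  have hfin : Lc/(4*(1+ε)) * n ≤ x := by
    rw [div_mul_eq_mul_div, div_le_iff₀ (by linarith : (0:ℝ) < 4*(1+ε))]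
    linarith [h4, hnLc]
  -- identify the sum with log R
  have hFS : (Finset.range (⌊y⌋₊ + 1)).filter
      (fun p : ℕ => p.Prime ∧ (p:ℝ) ≤ y ∧ p ∣ m) = S := by
    ext p
    simp only [hS, hP, Finset.mem_filter, Finset.mem_range, Nat.lt_succ_iff,
      Nat.mem_primeFactors]
    constructor
    · rintro ⟨_, hp, hpy, hpd⟩
      exact ⟨⟨hp, hpd, hm0⟩, hpy⟩
    · rintro ⟨⟨hp, hpd, _⟩, hpy⟩
      exact ⟨Nat.le_floor hpy, hp, hpy, hpd⟩
  rw [hFS]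
  have hlogsum : ∑ p ∈ S, Real.log (p:ℝ) = x := by
    rw [hx, hRdef, Nat.cast_prod]
    exact (Real.log_prod fun p hp => by
      exact_mod_cast (hprimeP p (Finset.mem_of_mem_filter p hp)).pos.ne').symm
  rw [hlogsum]
  exact hfin
end

section
/- Assume the ABC conjecture. Let a > 1 be an integer, c > 1 real, K ≥ 1. Then the set {n ≥ 1 : s_{Kn}(a^n - 1) > c^n} is finite. -/
open Finset Real


private lemma cube_le_aux : ∀ e : ℕ, (e + 1) ^ 3 ≤ 8 * 2 ^ e := by
  intro e
  induction e with
  | zero => norm_num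
  | succ k ih =>
    rcases le_or_gt k 2 with hk | hk
    · interval_cases k <;> norm_num
    · have h1 : (k + 2) ^ 3 ≤ 2 * (k + 1) ^ 3 := by nlinarith [hk, sq_nonneg k, k.zero_le]
      calc (k + 1 + 1) ^ 3 = (k + 2) ^ 3 := by ring
        _ ≤ 2 * (k + 1) ^ 3 := h1
        _ ≤ 2 * (8 * 2 ^ k) := by omega
        _ = 8 * 2 ^ (k + 1) := by ring

private lemma card_divisors_cube_le (n : ℕ) (hn : n ≠ 0) :
    n.divisors.card ^ 3 ≤ 16777216 * n := by
  rw [Nat.card_divisors hn]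
  have hself : ∏ p ∈ n.primeFactors, p ^ n.factorization p = n := by
    rw [← Nat.support_factorization]
    exact Nat.factorization_prod_pow_eq_self hn
  calc (∏ p ∈ n.primeFactors, (n.factorization p + 1)) ^ 3
      = ∏ p ∈ n.primeFactors, (n.factorization p + 1) ^ 3 := by
        rw [← Finset.prod_pow]
    _ ≤ ∏ p ∈ n.primeFactors, ((if p ≤ 7 then 8 else 1) * p ^ n.factorization p) := by
        apply Finset.prod_le_prod
        · intro p hp; positivity
        · intro p hp
          have hp' : p.Prime := Nat.prime_of_mem_primeFactors hp
          have he : 1 ≤ n.factorization p := by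
            have := Nat.support_factorization n ▸ hp
            exact Nat.one_le_iff_ne_zero.mpr (Finsupp.mem_support_iff.mp this)
          set e := n.factorization p with hedef
          split_ifs with h7
          · calc (e + 1) ^ 3 ≤ 8 * 2 ^ e := cube_le_aux e
              _ ≤ 8 * p ^ e := by
                have : 2 ^ e ≤ p ^ e := Nat.pow_le_pow_left hp'.two_le e
                omega
          · have h8 : 8 ≤ p := by omega
            have h2e : e + 1 ≤ 2 ^ e := Nat.lt_two_pow_self
            calc (e + 1) ^ 3 ≤ (2 ^ e) ^ 3 := Nat.pow_le_pow_left h2e 3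
              _ = 8 ^ e := by rw [← pow_mul, mul_comm, pow_mul]; norm_num
              _ ≤ p ^ e := Nat.pow_le_pow_left h8 e
              _ = 1 * p ^ e := (one_mul _).symm
    _ = (∏ p ∈ n.primeFactors, (if p ≤ 7 then 8 else 1)) *
          ∏ p ∈ n.primeFactors, p ^ n.factorization p := Finset.prod_mul_distrib
    _ ≤ 16777216 * n := by
        rw [hself]
        apply Nat.mul_le_mul_right
        calc ∏ p ∈ n.primeFactors, (if p ≤ 7 then (8:ℕ) else 1)
            = ∏ p ∈ n.primeFactors.filter (· ≤ 7), (8:ℕ) := (Finset.prod_filter _ _).symm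
          _ = 8 ^ (n.primeFactors.filter (· ≤ 7)).card := Finset.prod_const 8
          _ ≤ 8 ^ 8 := by
              apply Nat.pow_le_pow_right (by norm_num)
              have hsub : n.primeFactors.filter (· ≤ 7) ⊆ Finset.range 8 := by
                intro p hp
                simp only [Finset.mem_filter] at hp
                exact Finset.mem_range.mpr (by omega)
              calc _ ≤ (Finset.range 8).card := Finset.card_le_card hsub
                _ = 8 := Finset.card_range 8
          _ = 16777216 := by norm_num

private lemma smoothPart_eq (y : ℝ) (m : ℕ) :
    smoothPart y m = ∏ p ∈ m.primeFactors.filter (fun p : ℕ => (p : ℝ) ≤ y), p ^ m.factorization p := by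
  classical
  rw [smoothPart, Finset.prod_filter]
  apply Finset.prod_congr rfl
  intro p _
  split_ifs <;> simp

private lemma smooth_mul_rad_dvd (y : ℝ) (m : ℕ) (hm : m ≠ 0) :
    smoothPart y m * ∏ p ∈ m.primeFactors, p ∣
      m * ∏ p ∈ m.primeFactors.filter (fun p : ℕ => (p : ℝ) ≤ y), p := by
  classical
  set P := m.primeFactors.filter (fun p : ℕ => (p : ℝ) ≤ y) with hP
  set P' := m.primeFactors.filter (fun p : ℕ => ¬ (p : ℝ) ≤ y) with hP'
  have hself : ∏ p ∈ m.primeFactors, p ^ m.factorization p = m := by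
    rw [← Nat.support_factorization]
    exact Nat.factorization_prod_pow_eq_self hm
  have hsplit : ∏ p ∈ m.primeFactors, p = (∏ p ∈ P, p) * ∏ p ∈ P', p :=
    (Finset.prod_filter_mul_prod_filter_not _ _ _).symm
  have key : (∏ p ∈ P, p ^ m.factorization p) * ∏ p ∈ P', p ∣ m := by
    have h1 : ∏ p ∈ P', p ∣ ∏ p ∈ P', p ^ m.factorization p := by
      apply Finset.prod_dvd_prod_of_dvd
      intro p hp
      have hmem : p ∈ m.primeFactors := Finset.mem_of_mem_filter p hp
      have : m.factorization p ≠ 0 := by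
        have := Nat.support_factorization m ▸ hmem
        exact Finsupp.mem_support_iff.mp this
      exact dvd_pow_self p this
    have h2 : (∏ p ∈ P, p ^ m.factorization p) * ∏ p ∈ P', p ∣
        (∏ p ∈ P, p ^ m.factorization p) * ∏ p ∈ P', p ^ m.factorization p :=
      mul_dvd_mul_left _ h1
    have h3 : (∏ p ∈ P, p ^ m.factorization p) * ∏ p ∈ P', p ^ m.factorization p = m := by
      rw [Finset.prod_filter_mul_prod_filter_not]
      exact hself
    rwa [h3] at h2
  rw [smoothPart_eq, hsplit, ← hP]
  have : (∏ p ∈ P, p) * _ ∣ (∏ p ∈ P, p) * m := mul_dvd_mul_left (∏ p ∈ P, p) key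
  convert this using 1 <;> ring

private lemma abc_rad_lower (hABC : ABCConjecture) (a : ℕ) (ha : 1 < a) (ε : ℝ) (hε : 0 < ε) :
    ∃ C : ℝ, 0 ≤ C ∧ ∀ n : ℕ, 1 ≤ n →
      (n : ℝ) * Real.log a ≤
        C + (1 + ε) * (Real.log ((∏ p ∈ (a ^ n - 1).primeFactors, p : ℕ) : ℝ) + Real.log a) := by
  obtain ⟨Kε, hKε, h⟩ := hABC ε hε
  refine ⟨|Real.log Kε|, abs_nonneg _, fun n hn => ?_⟩
  have hn0 : n ≠ 0 := by omega
  have h2 : 2 ≤ a ^ n := le_trans ha (Nat.le_self_pow hn0 a)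
  set m : ℕ := a ^ n - 1 with hmdef
  have hm1 : 1 ≤ m := by omega
  have hm0 : m ≠ 0 := by omega
  have hA : ((m : ℤ)) ≠ 0 := by positivity
  have hCne : ((a : ℤ)) ^ n ≠ 0 := by positivity
  have hsum : (m : ℤ) + 1 = (a : ℤ) ^ n := by
    have : ((m : ℕ) : ℤ) = ((a ^ n : ℕ) : ℤ) - 1 := by
      rw [hmdef, Nat.cast_sub (by omega)]; norm_num
    rw [this]; push_cast; ring
  have key := h (m : ℤ) 1 ((a : ℤ) ^ n) hA one_ne_zero hCne (isCoprime_one_right) hsum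
  -- compute the radical
  have hprodint : ((m : ℤ) * 1 * (a : ℤ) ^ n) = ((m * a ^ n : ℕ) : ℤ) := by push_cast; ring
  have hnatAbs : ((m : ℤ) * 1 * (a : ℤ) ^ n).natAbs = m * a ^ n := by
    rw [hprodint, Int.natAbs_natCast]
  have hcop : Nat.Coprime m (a ^ n) := by
    have h1 : Nat.Coprime (1 + m) m := Nat.coprime_add_self_left.mpr (Nat.coprime_one_left m)
    have h1m : 1 + m = a ^ n := by omega
    rw [h1m] at h1
    exact h1.symm
  have hdisj : Disjoint m.primeFactors a.primeFactors := by
    have := hcop.disjoint_primeFactors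
    rwa [Nat.primeFactors_pow a hn0] at this
  have hpf : (m * a ^ n).primeFactors = m.primeFactors ∪ a.primeFactors := by
    rw [Nat.primeFactors_mul hm0 (by positivity), Nat.primeFactors_pow a hn0]
  have hrad : intRadical ((m : ℤ) * 1 * (a : ℤ) ^ n) =
      (∏ p ∈ m.primeFactors, p) * ∏ p ∈ a.primeFactors, p := by
    rw [intRadical, hnatAbs, hpf, Finset.prod_union hdisj]
  set R : ℕ := ∏ p ∈ m.primeFactors, p with hRdef
  set Ra : ℕ := ∏ p ∈ a.primeFactors, p with hRadef
  have hR1 : 1 ≤ R := Finset.one_le_prod' fun p hp => (Nat.prime_of_mem_primeFactors hp).one_lt.le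
  have hRa1 : 1 ≤ Ra := Finset.one_le_prod' fun p hp => (Nat.prime_of_mem_primeFactors hp).one_lt.le
  have hRaa : Ra ≤ a := Nat.le_of_dvd (by omega) (Nat.prod_primeFactors_dvd a)
  -- extract the inequality on a^n
  have hmax : ((a : ℝ)) ^ n ≤ Kε * ((R * Ra : ℕ) : ℝ) ^ (1 + ε) := by
    rw [hrad] at key
    refine le_trans ?_ key
    have h1 : ((a : ℝ)) ^ n = |((((a : ℤ)) ^ n : ℤ) : ℝ)| := by
      rw [abs_of_nonneg (by positivity)]; push_cast; ring
    rw [h1]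
    exact le_max_of_le_right (le_max_right _ _)
  -- take logs
  have hX1 : (1 : ℝ) ≤ ((R * Ra : ℕ) : ℝ) := by exact_mod_cast Nat.one_le_iff_ne_zero.mpr (by positivity)
  have hX0 : (0 : ℝ) < ((R * Ra : ℕ) : ℝ) := lt_of_lt_of_le one_pos hX1
  have hlog := Real.log_le_log (by positivity : (0:ℝ) < (a:ℝ)^n) hmax
  rw [Real.log_pow, Real.log_mul (ne_of_gt hKε) (by positivity), Real.log_rpow hX0] at hlog
  have hXsplit : Real.log ((R * Ra : ℕ) : ℝ) = Real.log (R : ℝ) + Real.log (Ra : ℝ) := by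
    push_cast
    rw [Real.log_mul (by positivity) (by positivity)]
  rw [hXsplit] at hlog
  have hlogRa : Real.log (Ra : ℝ) ≤ Real.log (a : ℝ) :=
    Real.log_le_log (by exact_mod_cast lt_of_lt_of_le one_pos hRa1) (by exact_mod_cast hRaa)
  calc (n : ℝ) * Real.log a ≤ Real.log Kε + (1 + ε) * (Real.log (R : ℝ) + Real.log (Ra : ℝ)) := hlog
    _ ≤ |Real.log Kε| + (1 + ε) * (Real.log (R : ℝ) + Real.log (a : ℝ)) := by
        have hh1 : Real.log Kε ≤ |Real.log Kε| := le_abs_self _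
        have hh2 : (1 + ε) * (Real.log (R : ℝ) + Real.log (Ra : ℝ)) ≤
            (1 + ε) * (Real.log (R : ℝ) + Real.log (a : ℝ)) :=
          mul_le_mul_of_nonneg_left (by linarith) (by linarith)
        linarith

private lemma rad_smooth_bound (a n : ℕ) (ha : 1 < a) (hn : 1 ≤ n) (y : ℝ) (hy : 1 ≤ y) :
    Real.log ((∏ p ∈ (a ^ n - 1).primeFactors.filter (fun p : ℕ => (p : ℝ) ≤ y), p : ℕ) : ℝ) ≤
      (n.divisors.card : ℝ) * Real.sqrt (y * Real.log y * Real.log a) := by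
  classical
  have hn0 : n ≠ 0 := by omega
  have h2an : 2 ≤ a ^ n := le_trans ha (Nat.le_self_pow hn0 a)
  set m : ℕ := a ^ n - 1 with hmdef
  have hm0 : m ≠ 0 := by omega
  set P := m.primeFactors.filter (fun p : ℕ => (p : ℝ) ≤ y) with hP
  set d : ℕ → ℕ := fun p => orderOf ((a : ZMod p)) with hd
  have hla : 0 ≤ Real.log a := Real.log_nonneg (by exact_mod_cast ha.le)
  have hly : 0 ≤ Real.log y := Real.log_nonneg hy
  have hy0 : 0 < y := lt_of_lt_of_le one_pos hy
  -- facts for p ∈ P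
  have hPfacts : ∀ p ∈ P, p.Prime ∧ p ∣ m ∧ (p : ℝ) ≤ y := by
    intro p hp
    rw [hP, Finset.mem_filter] at hp
    exact ⟨Nat.prime_of_mem_primeFactors hp.1, Nat.dvd_of_mem_primeFactors hp.1, hp.2⟩
  have hfacts : ∀ p ∈ P, d p ∣ n ∧ d p ∣ p - 1 ∧ p ∣ a ^ (d p) - 1 := by
    intro p hp
    obtain ⟨hpp, hpdvd, hpy⟩ := hPfacts p hp
    haveI : Fact p.Prime := ⟨hpp⟩
    have hane : ((a : ZMod p)) ≠ 0 := by
      intro h0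
      have hpa : p ∣ a := by
        have := (ZMod.natCast_eq_zero_iff a p).mp h0
        exact this
      have hpan : p ∣ a ^ n := hpa.pow hn0
      have h1 : p ∣ a ^ n - m := Nat.dvd_sub hpan hpdvd
      have : a ^ n - m = 1 := by omega
      rw [this] at h1
      exact hpp.one_lt.ne' (Nat.dvd_one.mp h1)
    have hcast : ∀ k : ℕ, p ∣ a ^ k - 1 ↔ ((a : ZMod p)) ^ k = 1 := by
      intro k
      rw [← ZMod.natCast_eq_zero_iff]
      have h1k : 1 ≤ a ^ k := Nat.one_le_pow k a (by omega)
      rw [Nat.cast_sub h1k]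
      push_cast
      constructor
      · intro h; linear_combination h
      · intro h; rw [h]; ring
    have hpown : ((a : ZMod p)) ^ n = 1 := (hcast n).mp (hmdef ▸ hpdvd)
    refine ⟨orderOf_dvd_of_pow_eq_one hpown, ?_, ?_⟩
    · exact orderOf_dvd_of_pow_eq_one (ZMod.pow_card_sub_one_eq_one hane)
    · exact (hcast (d p)).mpr (pow_orderOf_eq_one _)
  have hmaps : ∀ p ∈ P, d p ∈ n.divisors :=
    fun p hp => Nat.mem_divisors.mpr ⟨(hfacts p hp).1, hn0⟩
  -- turn the log of the product into a sum
  have hlogprod : Real.log ((∏ p ∈ P, p : ℕ) : ℝ) = ∑ p ∈ P, Real.log (p : ℝ) := by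
    rw [Nat.cast_prod]
    exact Real.log_prod fun p hp => by
      exact_mod_cast (hPfacts p hp).1.pos.ne'
  rw [hlogprod, ← Finset.sum_fiberwise_of_maps_to hmaps (fun p : ℕ => Real.log (p : ℝ))]
  -- bound each fiber
  have hfiber : ∀ e ∈ n.divisors,
      ∑ p ∈ P.filter (fun p => d p = e), Real.log (p : ℝ) ≤
        Real.sqrt (y * Real.log y * Real.log a) := by
    intro e he
    obtain ⟨hedvd, -⟩ := Nat.mem_divisors.mp he
    have he1 : 1 ≤ e := Nat.pos_of_dvd_of_pos hedvd (by omega)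
    set Q := P.filter (fun p => d p = e) with hQ
    have hQmem : ∀ p ∈ Q, p ∈ P ∧ d p = e := fun p hp => Finset.mem_filter.mp hp
    set S := ∑ p ∈ Q, Real.log (p : ℝ) with hS
    have hS0 : 0 ≤ S :=
      Finset.sum_nonneg fun p hp =>
        Real.log_nonneg (by exact_mod_cast (hPfacts p (hQmem p hp).1).1.one_lt.le)
    -- Bound A : S ≤ e * log a
    have hA : S ≤ (e : ℝ) * Real.log a := by
      have hdvd : ∏ p ∈ Q, p ∣ a ^ e - 1 := by
        apply Finset.prod_primes_dvd
        · intro p hp; exact (hPfacts p (hQmem p hp).1).1.prime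
        · intro p hp
          have h3 := (hfacts p (hQmem p hp).1).2.2
          rwa [(hQmem p hp).2] at h3
      have hae1 : 1 ≤ a ^ e - 1 := by
        have : 2 ≤ a ^ e := le_trans ha (Nat.le_self_pow (by omega) a)
        omega
      have hle : ∏ p ∈ Q, p ≤ a ^ e := le_trans (Nat.le_of_dvd (by omega) hdvd) (by omega)
      have hlogeq : S = Real.log ((∏ p ∈ Q, p : ℕ) : ℝ) := by
        rw [Nat.cast_prod]
        exact (Real.log_prod fun p hp => by
          exact_mod_cast (hPfacts p (hQmem p hp).1).1.pos.ne').symm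
      rw [hlogeq]
      have hQpos : 0 < ∏ p ∈ Q, p :=
        Finset.prod_pos fun p hp => (hPfacts p (hQmem p hp).1).1.pos
      calc Real.log ((∏ p ∈ Q, p : ℕ) : ℝ) ≤ Real.log ((a : ℝ) ^ e) := by
            apply Real.log_le_log
            · exact_mod_cast hQpos
            · exact_mod_cast hle
        _ = (e : ℝ) * Real.log a := by rw [Real.log_pow]
    -- Bound B : S ≤ (y / e) * log y
    have hB : S ≤ (y / (e : ℝ)) * Real.log y := by
      have hcard : (Q.card : ℝ) * (e : ℝ) ≤ y := by
        have hinj : Q.card ≤ (Finset.Icc 1 (⌊y⌋₊ / e)).card := by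
          apply Finset.card_le_card_of_injOn (fun p => (p - 1) / e)
          · intro p hp
            obtain ⟨hpP, hpde⟩ := hQmem p hp
            obtain ⟨hpp, hpdvd, hpy⟩ := hPfacts p hpP
            have hedvd' : e ∣ p - 1 := hpde ▸ (hfacts p hpP).2.1
            have hp2 : 2 ≤ p := hpp.two_le
            have hep1 : e ≤ p - 1 := Nat.le_of_dvd (by omega) hedvd'
            have hpfl : p ≤ ⌊y⌋₊ := Nat.le_floor hpy
            rw [Finset.coe_Icc, Set.mem_Icc]
            constructor
            · rw [Nat.one_le_div_iff (by omega)]; exact hep1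
            · exact Nat.div_le_div_right (by omega)
          · intro p hp q hq hpq
            replace hp := hQmem p (Finset.mem_coe.mp hp)
            replace hq := hQmem q (Finset.mem_coe.mp hq)
            have hpe : e ∣ p - 1 := hp.2 ▸ (hfacts p hp.1).2.1
            have hqe : e ∣ q - 1 := hq.2 ▸ (hfacts q hq.1).2.1
            have h1 : p - 1 = e * ((p - 1) / e) := (Nat.mul_div_cancel' hpe).symm
            have h2 : q - 1 = e * ((q - 1) / e) := (Nat.mul_div_cancel' hqe).symm
            have hp2 : 2 ≤ p := (hPfacts p hp.1).1.two_le
            have hq2 : 2 ≤ q := (hPfacts q hq.1).1.two_le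
            have hpq' : (p - 1) / e = (q - 1) / e := hpq
            have : p - 1 = q - 1 := by rw [h1, h2, hpq']
            omega
        have hcard2 : Q.card * e ≤ ⌊y⌋₊ := by
          have h1 : (Finset.Icc 1 (⌊y⌋₊ / e)).card = ⌊y⌋₊ / e := by
            rw [Nat.card_Icc, Nat.add_sub_cancel]
          have hqle : Q.card ≤ ⌊y⌋₊ / e := h1 ▸ hinj
          calc Q.card * e ≤ (⌊y⌋₊ / e) * e := Nat.mul_le_mul hqle (le_refl e)
            _ ≤ ⌊y⌋₊ := Nat.div_mul_le_self _ _
        calc (Q.card : ℝ) * (e : ℝ) = ((Q.card * e : ℕ) : ℝ) := by push_cast; ring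
          _ ≤ (⌊y⌋₊ : ℝ) := by exact_mod_cast hcard2
          _ ≤ y := Nat.floor_le hy0.le
      have hcard' : (Q.card : ℝ) ≤ y / (e : ℝ) := by
        rw [le_div_iff₀ (by exact_mod_cast he1 : (0:ℝ) < (e:ℝ))]
        exact hcard
      calc S ≤ ∑ _p ∈ Q, Real.log y := by
            apply Finset.sum_le_sum
            intro p hp
            apply Real.log_le_log
            · exact_mod_cast (hPfacts p (hQmem p hp).1).1.pos
            · exact (hPfacts p (hQmem p hp).1).2.2
        _ = (Q.card : ℝ) * Real.log y := by rw [Finset.sum_const, nsmul_eq_mul]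
        _ ≤ (y / (e : ℝ)) * Real.log y := mul_le_mul_of_nonneg_right hcard' hly
    -- combine via sqrt
    rw [← Real.sqrt_sq hS0]
    apply Real.sqrt_le_sqrt
    have he0 : ((e : ℝ)) ≠ 0 := by positivity
    calc S ^ 2 = S * S := sq S
      _ ≤ ((e : ℝ) * Real.log a) * ((y / (e : ℝ)) * Real.log y) :=
          mul_le_mul hA hB hS0 (by positivity)
      _ = y * Real.log y * Real.log a := by field_simp
  calc ∑ e ∈ n.divisors, ∑ p ∈ P.filter (fun p => d p = e), Real.log (p : ℝ)
      ≤ ∑ _e ∈ n.divisors, Real.sqrt (y * Real.log y * Real.log a) :=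
        Finset.sum_le_sum hfiber
    _ = (n.divisors.card : ℝ) * Real.sqrt (y * Real.log y * Real.log a) := by
        rw [Finset.sum_const, nsmul_eq_mul]

theorem abc_implies_smooth_set_finite
    (hABC : ABCConjecture)
    (a : ℕ) (ha : 1 < a) (c : ℝ) (hc : 1 < c) (K : ℝ) (hK : 1 ≤ K) :
    {n : ℕ | 1 ≤ n ∧
      (c : ℝ) ^ n < (smoothPart (K * (n : ℝ)) (a ^ n - 1) : ℝ)}.Finite := by
  classical
  set la := Real.log a with hladef
  have hla0 : 0 < la := Real.log_pos (by exact_mod_cast ha)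
  have hlc : 0 < Real.log c := Real.log_pos hc
  set ε : ℝ := Real.log c / (2 * la) with hεdef
  have hε0 : 0 < ε := by positivity
  obtain ⟨C₀, hC₀, habc⟩ := abc_rad_lower hABC a ha ε hε0
  set C₃ : ℝ := 256 * K * Real.sqrt (8 * la) with hC₃def
  have hK0 : (0:ℝ) < K := lt_of_lt_of_le one_pos hK
  have hC₃0 : 0 ≤ C₃ := by positivity
  -- the eventual bound
  have hev : ∀ᶠ x : ℝ in Filter.atTop,
      C₃ * x ^ ((43:ℝ)/48) + (C₀ + la) < (Real.log c / 2) * x := by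
    have t1 := (tendsto_rpow_neg_atTop (by norm_num : (0:ℝ) < 5/48)).const_mul C₃
    have t2 := tendsto_inv_atTop_zero.const_mul (C₀ + la)
    have h0 : Filter.Tendsto (fun x : ℝ => C₃ * x ^ (-((5:ℝ)/48)) + (C₀ + la) * x⁻¹)
        Filter.atTop (nhds 0) := by
      have := t1.add t2
      simpa using this
    have h1 := h0.eventually_lt_const (by positivity : (0:ℝ) < Real.log c / 2)
    filter_upwards [h1, Filter.eventually_ge_atTop (1:ℝ)] with x hx hx1
    have hx0 : (0:ℝ) < x := lt_of_lt_of_le one_pos hx1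
    have hxx : x ^ ((43:ℝ)/48) = x ^ (-((5:ℝ)/48)) * x := by
      rw [← Real.rpow_add_one hx0.ne' (-((5:ℝ)/48))]
      norm_num
    have heq : C₃ * x ^ ((43:ℝ)/48) + (C₀ + la) =
        (C₃ * x ^ (-((5:ℝ)/48)) + (C₀ + la) * x⁻¹) * x := by
      rw [hxx]
      field_simp
    rw [heq]
    exact mul_lt_mul_of_pos_right hx hx0
  have hevN : ∀ᶠ n' : ℕ in Filter.atTop,
      C₃ * (n' : ℝ) ^ ((43:ℝ)/48) + (C₀ + la) < (Real.log c / 2) * (n' : ℝ) :=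
    tendsto_natCast_atTop_atTop.eventually hev
  obtain ⟨N, hN⟩ := Filter.eventually_atTop.mp hevN
  apply Set.Finite.subset (Set.finite_Iio N)
  intro n hn
  rw [Set.mem_Iio]
  by_contra hge
  push_neg at hge
  obtain ⟨hn1, hcn⟩ := hn
  have hNn := hN n hge
  -- notation
  have hn0 : n ≠ 0 := by omega
  have hnR1 : (1:ℝ) ≤ (n:ℝ) := by exact_mod_cast hn1
  have hnR0 : (0:ℝ) < (n:ℝ) := lt_of_lt_of_le one_pos hnR1
  set y : ℝ := K * (n : ℝ) with hydef
  have hy1 : (1:ℝ) ≤ y := by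
    calc (1:ℝ) = 1 * 1 := (one_mul 1).symm
      _ ≤ K * (n:ℝ) := mul_le_mul hK hnR1 one_pos.le hK0.le
  have hy0 : (0:ℝ) < y := lt_of_lt_of_le one_pos hy1
  have h2an : 2 ≤ a ^ n := le_trans ha (Nat.le_self_pow hn0 a)
  set m : ℕ := a ^ n - 1 with hmdef
  have hm0 : m ≠ 0 := by omega
  set s : ℕ := smoothPart y m with hsdef
  set radm : ℕ := ∏ p ∈ m.primeFactors, p with hradmdef
  set NR : ℕ := ∏ p ∈ m.primeFactors.filter (fun p : ℕ => (p : ℝ) ≤ y), p with hNRdef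
  have hradm1 : 1 ≤ radm :=
    Finset.one_le_prod' fun p hp => (Nat.prime_of_mem_primeFactors hp).pos
  have hNR1 : 1 ≤ NR :=
    Finset.one_le_prod' fun p hp =>
      (Nat.prime_of_mem_primeFactors (Finset.mem_of_mem_filter p hp)).pos
  have hs1 : (1:ℝ) < (s : ℝ) := lt_of_le_of_lt (one_le_pow₀ hc.le) hcn
  -- the basic log chain
  have hdvd := smooth_mul_rad_dvd y m hm0
  have hleN : s * radm ≤ m * NR :=
    Nat.le_of_dvd (Nat.mul_pos (Nat.pos_of_ne_zero hm0) hNR1) hdvd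
  have hleR : (s:ℝ) * (radm:ℝ) ≤ (m:ℝ) * (NR:ℝ) := by exact_mod_cast hleN
  have hs0 : (0:ℝ) < (s:ℝ) := lt_trans one_pos hs1
  have hradm0 : (0:ℝ) < (radm:ℝ) := by exact_mod_cast hradm1
  have hNR0 : (0:ℝ) < (NR:ℝ) := by exact_mod_cast hNR1
  have hmR0 : (0:ℝ) < (m:ℝ) := by exact_mod_cast Nat.pos_of_ne_zero hm0
  have F2 : Real.log (s:ℝ) + Real.log (radm:ℝ) ≤ Real.log (m:ℝ) + Real.log (NR:ℝ) := by
    rw [← Real.log_mul hs0.ne' hradm0.ne', ← Real.log_mul hmR0.ne' hNR0.ne']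
    exact Real.log_le_log (by positivity) hleR
  have hlogm : Real.log (m:ℝ) ≤ (n:ℝ) * la := by
    have h1 : (m:ℝ) ≤ (a:ℝ) ^ n := by
      have : (m:ℕ) ≤ a ^ n := Nat.sub_le _ _
      exact_mod_cast this
    calc Real.log (m:ℝ) ≤ Real.log ((a:ℝ) ^ n) := Real.log_le_log hmR0 h1
      _ = (n:ℝ) * la := by rw [Real.log_pow]
  have F1 : (n:ℝ) * Real.log c < Real.log (s:ℝ) := by
    have := Real.log_lt_log (by positivity : (0:ℝ) < c ^ n) hcn
    rwa [Real.log_pow] at this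
  -- lower bound on log radm from ABC
  have h1ε : (0:ℝ) < 1 + ε := by linarith
  have hradm_lb : (n:ℝ) * la / (1 + ε) - C₀ - la ≤ Real.log (radm:ℝ) := by
    have F3 := habc n hn1
    have h5 : ((n:ℝ) * la - C₀ - (1+ε)*la) / (1+ε) ≤ Real.log (radm:ℝ) := by
      rw [div_le_iff₀ h1ε]
      nlinarith [F3]
    have h6 : C₀ / (1+ε) ≤ C₀ := div_le_self hC₀ (by linarith)
    have h7 : ((n:ℝ)*la - C₀ - (1+ε)*la)/(1+ε) =
        (n:ℝ)*la/(1+ε) - C₀/(1+ε) - la := by field_simp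
    linarith
  have hnla1 : (n:ℝ)*la - (n:ℝ)*la/(1+ε) ≤ (n:ℝ) * (Real.log c / 2) := by
    have e1 : (n:ℝ)*la - (n:ℝ)*la/(1+ε) = (n:ℝ)*la*ε/(1+ε) := by field_simp; ring
    have e2 : (n:ℝ)*la*ε/(1+ε) ≤ (n:ℝ)*la*ε := div_le_self (by positivity) (by linarith)
    have e3 : (n:ℝ)*la*ε = (n:ℝ) * (Real.log c / 2) := by
      rw [hεdef]
      field_simp
    linarith
  -- bound on log NR
  have hF4 := rad_smooth_bound a n ha hn1 y hy1
  rw [← hmdef, ← hNRdef] at hF4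
  have hdc : (n.divisors.card : ℝ) ≤ 256 * (n:ℝ) ^ ((1:ℝ)/3) := by
    have h1 : ((n.divisors.card : ℝ)) ^ (3:ℕ) ≤ 16777216 * (n:ℝ) := by
      exact_mod_cast card_divisors_cube_le n hn0
    have h2 : (256 * (n:ℝ) ^ ((1:ℝ)/3)) ^ (3:ℕ) = 16777216 * (n:ℝ) := by
      rw [mul_pow, ← Real.rpow_natCast ((n:ℝ) ^ ((1:ℝ)/3)) 3, ← Real.rpow_mul hnR0.le]
      norm_num
    have h3 : ((n.divisors.card : ℝ)) ^ (3:ℕ) ≤ (256 * (n:ℝ) ^ ((1:ℝ)/3)) ^ (3:ℕ) := by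
      rw [h2]; exact h1
    exact (pow_le_pow_iff_left₀ (by positivity) (by positivity) (by norm_num)).mp h3
  have hlogy : Real.log y ≤ 8 * y ^ ((1:ℝ)/8) := by
    have h := Real.log_le_rpow_div hy0.le (by norm_num : (0:ℝ) < 1/8)
    have h8 : y ^ ((1:ℝ)/8) / (1/8) = 8 * y ^ ((1:ℝ)/8) := by ring
    rw [h8] at h
    exact h
  have hyy : y * Real.log y * la ≤ 8 * la * y ^ ((9:ℝ)/8) := by
    have h1 : y * Real.log y ≤ y * (8 * y ^ ((1:ℝ)/8)) := mul_le_mul_of_nonneg_left hlogy hy0.le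
    have h3 : y ^ ((1:ℝ)) * y ^ ((1:ℝ)/8) = y ^ ((9:ℝ)/8) := by
      rw [← Real.rpow_add hy0]; norm_num
    have h2 : y * (8 * y ^ ((1:ℝ)/8)) = 8 * y ^ ((9:ℝ)/8) := by
      rw [← h3, Real.rpow_one]; ring
    have h4 : y * Real.log y ≤ 8 * y ^ ((9:ℝ)/8) := le_of_le_of_eq h1 h2
    calc y * Real.log y * la ≤ (8 * y ^ ((9:ℝ)/8)) * la :=
          mul_le_mul_of_nonneg_right h4 hla0.le
      _ = 8 * la * y ^ ((9:ℝ)/8) := by ring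
  have hsqrt : Real.sqrt (y * Real.log y * la) ≤
      Real.sqrt (8*la) * (K * (n:ℝ) ^ ((9:ℝ)/16)) := by
    calc Real.sqrt (y * Real.log y * la) ≤ Real.sqrt (8 * la * y ^ ((9:ℝ)/8)) :=
          Real.sqrt_le_sqrt hyy
      _ = Real.sqrt (8*la) * Real.sqrt (y ^ ((9:ℝ)/8)) := Real.sqrt_mul (by positivity) _
      _ = Real.sqrt (8*la) * y ^ ((9:ℝ)/16) := by
          have hss : Real.sqrt (y ^ ((9:ℝ)/8)) = y ^ ((9:ℝ)/16) := by
            rw [Real.sqrt_eq_rpow, ← Real.rpow_mul hy0.le]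
            norm_num
          rw [hss]
      _ ≤ Real.sqrt (8*la) * (K * (n:ℝ) ^ ((9:ℝ)/16)) := by
          apply mul_le_mul_of_nonneg_left ?_ (Real.sqrt_nonneg _)
          rw [hydef, Real.mul_rpow hK0.le hnR0.le]
          apply mul_le_mul_of_nonneg_right ?_ (by positivity)
          calc K ^ ((9:ℝ)/16) ≤ K ^ (1:ℝ) :=
                Real.rpow_le_rpow_of_exponent_le hK (by norm_num)
            _ = K := Real.rpow_one K
  have hF5 : (n.divisors.card : ℝ) * Real.sqrt (y * Real.log y * la) ≤
      C₃ * (n:ℝ) ^ ((43:ℝ)/48) := by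
    calc (n.divisors.card : ℝ) * Real.sqrt (y * Real.log y * la)
        ≤ (256 * (n:ℝ) ^ ((1:ℝ)/3)) * (Real.sqrt (8*la) * (K * (n:ℝ) ^ ((9:ℝ)/16))) :=
          mul_le_mul hdc hsqrt (Real.sqrt_nonneg _) (by positivity)
      _ = C₃ * ((n:ℝ) ^ ((1:ℝ)/3) * (n:ℝ) ^ ((9:ℝ)/16)) := by rw [hC₃def]; ring
      _ = C₃ * (n:ℝ) ^ ((43:ℝ)/48) := by rw [← Real.rpow_add hnR0]; norm_num
  have F4 : Real.log (NR:ℝ) ≤ C₃ * (n:ℝ) ^ ((43:ℝ)/48) := le_trans hF4 hF5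
  linarith [F1, F2, hlogm, hradm_lb, hnla1, F4, hNn]
end
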